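/- arXiv:1208.3586 — 2 statements merged into one kernel-verified Lean document; each statement's English description precedes it below -/
import Mathlib

section
/- Let $p\neq q$ be fixed. For every even $m$, $\Psi_q(\widehat{\omega}_{p,q}^{m}) = \sum_{\pi\in\mathcal{NC}_m^2} b_{p,q}^{|\mathcal{B}_o(\pi)|}\, b_{q,p}^{|\mathcal{B}_e(\pi)|}$, where $\mathcal{B}_o(\pi)$ and $\mathcal{B}_e(\pi)$ are the sets of blocks of $\pi$ of odd and even depth respectively; odd moments vanish. In particular, if $(b_{p,q},b_{q,p})=(d_p,d_q)$ then $\Psi_q(\widehat{\omega}_{p,q}^6)=d_p^3+3d_p^2 d_q+d_p d_q^2$. -/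
open ContinuousLinearMap

/-- Basis-index test for nontrivial action of `℘_{p,q}` (see statement 6). -/
def actsOn {r : ℕ} (q : Fin r) (x : Fin r × List (Fin r)) : Bool :=
  match x.2 with
  | [] => x.1 == q
  | a :: _ => a == q

/-- `f` encodes a noncrossing pair partition of `[m]`. -/
def IsNCPairing {m : ℕ} (f : Fin m → Fin m) : Prop :=
  (∀ i, f (f i) = i) ∧ (∀ i, f i ≠ i) ∧
  ∀ i j : Fin m, i < j → j < f i → f i < f j → False

instance {m : ℕ} : DecidablePred (IsNCPairing (m := m)) := fun f => by
  unfold IsNCPairing; infer_instance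

/-- Left legs of the blocks of a pairing. -/
def leftLegs {m : ℕ} (f : Fin m → Fin m) : Finset (Fin m) :=
  Finset.univ.filter (fun i => i < f i)

/-- The depth of the block with left leg `l`: the number of blocks strictly nesting it. -/
def blockDepth {m : ℕ} (f : Fin m → Fin m) (l : Fin m) : ℕ :=
  (Finset.univ.filter (fun j => j < f j ∧ j < l ∧ f l < f j)).card

/-- Blocks (identified with their left legs) of even depth `0,2,4,…`. -/
def evenDepthBlocks {m : ℕ} (f : Fin m → Fin m) : Finset (Fin m) :=
  (leftLegs f).filter (fun l => Even (blockDepth f l))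

/-- Blocks of odd depth `1,3,…`. -/
def oddDepthBlocks {m : ℕ} (f : Fin m → Fin m) : Finset (Fin m) :=
  (leftLegs f).filter (fun l => ¬ Even (blockDepth f l))

namespace Stmt7Aux

variable {m : ℕ}


variable {m : ℕ}

/-- Height of a walk after `k` steps. -/
def ht (s : Fin m → Bool) (k : ℕ) : ℤ :=
  ∑ i : Fin m, if (i : ℕ) < k then (if s i then 1 else -1) else 0

lemma ht_zero (s : Fin m → Bool) : ht s 0 = 0 := by simp [ht]

lemma ht_succ (s : Fin m → Bool) (k : ℕ) :
    ht s (k+1) = ht s k + (if h : k < m then (if s ⟨k, h⟩ then 1 else -1) else 0) := by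
  unfold ht
  have hsplit : ∀ i : Fin m,
      (if (i:ℕ) < k+1 then (if s i then (1:ℤ) else -1) else 0)
      = (if (i:ℕ) < k then (if s i then (1:ℤ) else -1) else 0)
        + (if (i:ℕ) = k then (if s i then (1:ℤ) else -1) else 0) := by
    intro i
    by_cases h1 : (i:ℕ) < k <;> by_cases h2 : (i:ℕ) = k
    · omega
    · simp [h1, h2, Nat.lt_succ_of_lt h1]
    · simp [h1, h2]
    · have : ¬ ((i:ℕ) < k + 1) := by omega
      simp [h1, h2, this]
  rw [Finset.sum_congr rfl (fun i _ => hsplit i), Finset.sum_add_distrib]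
  congr 1
  by_cases h : k < m
  · rw [dif_pos h]
    have : ∀ i : Fin m, ((i:ℕ) = k) ↔ i = ⟨k, h⟩ := by
      intro i; constructor
      · intro hi; exact Fin.ext hi
      · intro hi; subst hi; rfl
    rw [Finset.sum_congr rfl (fun i _ => by rw [if_congr (this i) rfl rfl])]
    simp
  · rw [dif_neg h]
    apply Finset.sum_eq_zero
    intro i _
    have : ¬ ((i:ℕ) = k) := by have := i.isLt; omega
    simp [this]

lemma ht_succ_le (s : Fin m → Bool) (k : ℕ) : ht s (k+1) ≤ ht s k + 1 := by
  rw [ht_succ]; split_ifs <;> omega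

lemma ht_succ_ge (s : Fin m → Bool) (k : ℕ) : ht s k - 1 ≤ ht s (k+1) := by
  rw [ht_succ]; split_ifs <;> omega

lemma ivt_down (s : Fin m → Bool) (v : ℤ) (a c : ℕ) (hac : a ≤ c)
    (ha : v < ht s a) (hc : ht s c ≤ v) :
    ∃ k, a < k ∧ k ≤ c ∧ ht s k = v ∧ ∀ l, a ≤ l → l < k → v < ht s l := by
  classical
  have hne : a ≠ c := by rintro rfl; omega
  have hex : ∃ k, a < k ∧ k ≤ c ∧ ht s k ≤ v := ⟨c, lt_of_le_of_ne hac hne, le_refl c, hc⟩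
  set k0 := Nat.find hex with hk0
  obtain ⟨h1, h2, h3⟩ := Nat.find_spec hex
  rw [← hk0] at h1 h2 h3
  have hmin : ∀ l, a < l → l < k0 → v < ht s l := by
    intro l hal hlk
    by_contra hle
    push_neg at hle
    exact Nat.find_min hex hlk ⟨hal, le_trans hlk.le h2, hle⟩
  have hprev : v < ht s (k0 - 1) := by
    rcases Nat.lt_or_ge a (k0 - 1) with h | h
    · exact hmin _ h (by omega)
    · have : k0 - 1 = a := by omega
      rw [this]; exact ha
  have heq : ht s k0 = v := by
    have h4 : ht s (k0 - 1) - 1 ≤ ht s ((k0-1)+1) := ht_succ_ge s (k0-1)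
    have h5 : (k0 - 1) + 1 = k0 := by omega
    rw [h5] at h4
    omega
  refine ⟨k0, h1, h2, heq, ?_⟩
  intro l hal hlk
  rcases lt_or_eq_of_le hal with h | h
  · exact hmin l h hlk
  · rw [← h]; exact ha

lemma ivt_up (s : Fin m → Bool) (v : ℤ) (a c : ℕ) (hac : a ≤ c)
    (ha : ht s a ≤ v) (hc : v < ht s c) :
    ∃ k, a ≤ k ∧ k < c ∧ ht s k = v ∧ ∀ l, k < l → l ≤ c → v < ht s l := by
  classical
  set P : ℕ → Prop := fun l => a ≤ l ∧ ht s l ≤ v with hP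
  have hPdec : DecidablePred P := fun _ => instDecidableAnd
  set k0 := Nat.findGreatest P c with hk0
  have hPa : P a := ⟨le_refl a, ha⟩
  have hak : a ≤ k0 := Nat.le_findGreatest hac hPa
  have hkc : k0 ≤ c := Nat.findGreatest_le c
  have hPk0 : P k0 := Nat.findGreatest_spec hac hPa
  have hgr : ∀ l, k0 < l → l ≤ c → v < ht s l := by
    intro l h1 h2
    have h3 := Nat.findGreatest_is_greatest (n := c) (P := P) h1 h2
    simp only [hP, not_and, not_le] at h3
    exact h3 (le_trans hak h1.le)
  have hkc' : k0 < c := by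
    rcases lt_or_eq_of_le hkc with h | h
    · exact h
    · exfalso; rw [h] at hPk0; omega
  have heq : ht s k0 = v := by
    have h4 : v < ht s (k0 + 1) := hgr _ (Nat.lt_succ_self k0) (by omega)
    have h5 := ht_succ_le s k0
    have := hPk0.2
    omega
  exact ⟨k0, hak, hkc', heq, hgr⟩

-- Part B starts here
lemma ht_step_true (s : Fin m → Bool) (i : Fin m) (hi : s i = true) :
    ht s (↑i+1) = ht s ↑i + 1 := by
  rw [ht_succ, dif_pos i.isLt]
  simp [Fin.eta, hi]

lemma ht_step_false (s : Fin m → Bool) (i : Fin m) (hi : s i = false) :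
    ht s (↑i+1) = ht s ↑i - 1 := by
  rw [ht_succ, dif_pos i.isLt]
  simp [Fin.eta, hi]
  ring

/-- Validity of a walk: stays nonnegative (starting at offset `n`) and ends at `0`. -/
def PathOK (n : ℕ) (s : Fin m → Bool) : Prop :=
  (∀ k, k ≤ m → 0 ≤ (n:ℤ) + ht s k) ∧ (n:ℤ) + ht s m = 0

instance (n : ℕ) : DecidablePred (PathOK (m := m) n) := fun s => by
  unfold PathOK; exact instDecidableAnd

def upF (s : Fin m → Bool) (i : Fin m) : Finset (Fin m) :=
  Finset.univ.filter fun j => i < j ∧ ht s (↑j+1) = ht s ↑i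
def downF (s : Fin m → Bool) (i : Fin m) : Finset (Fin m) :=
  Finset.univ.filter fun j => j < i ∧ ht s ↑j = ht s (↑i+1)

/-- The matching partner of position `i` in the walk `s`. -/
def gmap (s : Fin m → Bool) (i : Fin m) : Fin m :=
  if s i then (if h : (upF s i).Nonempty then (upF s i).min' h else i)
  else (if h : (downF s i).Nonempty then (downF s i).max' h else i)

lemma up_spec {s : Fin m → Bool} (hs : PathOK 0 s) {i : Fin m} (hi : s i = true) :
    i < gmap s i ∧ ht s (↑(gmap s i)+1) = ht s ↑i ∧
      (∀ l : ℕ, ↑i < l → l ≤ ↑(gmap s i) → ht s ↑i < ht s l) ∧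
      (∀ x : Fin m, i < x → ht s (↑x+1) = ht s ↑i → gmap s i ≤ x) := by
  have hv0 : 0 ≤ ht s ↑i := by have := hs.1 ↑i (le_of_lt i.isLt); simpa using this
  have hstep := ht_step_true s i hi
  have hend : ht s m ≤ ht s ↑i := by
    have := hs.2; simp at this; omega
  have hne : (upF s i).Nonempty := by
    obtain ⟨k, hk1, hk2, hk3, _⟩ :=
      ivt_down s (ht s ↑i) (↑i+1) m i.isLt (by omega) (by omega)
    refine ⟨⟨k-1, by omega⟩, ?_⟩
    have hco : ((⟨k-1, by omega⟩ : Fin m) : ℕ) = k - 1 := rfl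
    simp only [upF, Finset.mem_filter, Finset.mem_univ, true_and, Fin.lt_def, hco]
    constructor
    · omega
    · rw [show (k-1)+1 = k by omega]; exact hk3
  have hg : gmap s i = (upF s i).min' hne := by
    simp only [gmap, hi, if_true, dif_pos hne]
  have hmem := (upF s i).min'_mem hne
  simp only [upF, Finset.mem_filter, Finset.mem_univ, true_and] at hmem
  rw [hg]
  refine ⟨hmem.1, hmem.2, ?_, ?_⟩
  · intro l hl1 hl2
    by_contra hcon
    push_neg at hcon
    obtain ⟨k, hk1, hk2, hk3, _⟩ := ivt_down s (ht s ↑i) (↑i+1) l hl1 (by omega) hcon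
    have hjlt := ((upF s i).min' hne).isLt
    have hkm : k - 1 < m := by omega
    have hmem2 : (⟨k-1, hkm⟩ : Fin m) ∈ upF s i := by
      simp only [upF, Finset.mem_filter, Finset.mem_univ, true_and, Fin.lt_def]
      exact ⟨by omega, by rw [show (k-1)+1 = k by omega]; exact hk3⟩
    have hle := (upF s i).min'_le _ hmem2
    rw [Fin.le_def] at hle
    simp only [] at hle
    omega
  · intro x hx1 hx2
    exact (upF s i).min'_le x (by
      simp only [upF, Finset.mem_filter, Finset.mem_univ, true_and]; exact ⟨hx1, hx2⟩)

lemma down_spec {s : Fin m → Bool} (hs : PathOK 0 s) {i : Fin m} (hi : s i = false) :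
    gmap s i < i ∧ ht s ↑(gmap s i) = ht s (↑i+1) ∧
      (∀ l : ℕ, ↑(gmap s i) < l → l ≤ ↑i → ht s (↑i+1) < ht s l) ∧
      (∀ x : Fin m, x < i → ht s ↑x = ht s (↑i+1) → x ≤ gmap s i) := by
  have hv0 : 0 ≤ ht s (↑i+1) := by
    have := hs.1 (↑i+1) i.isLt; simpa using this
  have hstep := ht_step_false s i hi
  have h0 : ht s 0 = 0 := ht_zero s
  have hne : (downF s i).Nonempty := by
    obtain ⟨k, hk1, hk2, hk3, _⟩ :=
      ivt_up s (ht s (↑i+1)) 0 ↑i (Nat.zero_le _) (by omega) (by omega)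
    refine ⟨⟨k, by omega⟩, ?_⟩
    simp only [downF, Finset.mem_filter, Finset.mem_univ, true_and, Fin.lt_def]
    exact ⟨hk2, hk3⟩
  have hg : gmap s i = (downF s i).max' hne := by
    simp only [gmap, hi, Bool.false_eq_true, if_false, dif_pos hne]
  have hmem := (downF s i).max'_mem hne
  simp only [downF, Finset.mem_filter, Finset.mem_univ, true_and] at hmem
  rw [hg]
  refine ⟨hmem.1, hmem.2, ?_, ?_⟩
  · intro l hl1 hl2
    by_contra hcon
    push_neg at hcon
    obtain ⟨k, hk1, hk2, hk3, _⟩ := ivt_up s (ht s (↑i+1)) l ↑i hl2 hcon (by omega)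
    have hmem2 : (⟨k, by omega⟩ : Fin m) ∈ downF s i := by
      simp only [downF, Finset.mem_filter, Finset.mem_univ, true_and, Fin.lt_def]
      exact ⟨by omega, hk3⟩
    have hle := (downF s i).le_max' _ hmem2
    rw [Fin.le_def] at hle
    simp only [] at hle
    omega
  · intro x hx1 hx2
    exact (downF s i).le_max' x (by
      simp only [downF, Finset.mem_filter, Finset.mem_univ, true_and]; exact ⟨hx1, hx2⟩)

lemma s_gmap_false {s : Fin m → Bool} (hs : PathOK 0 s) {i : Fin m} (hi : s i = true) :
    s (gmap s i) = false := by
  obtain ⟨h1, h2, h3, _⟩ := up_spec hs hi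
  cases hsj : s (gmap s i)
  · rfl
  · exfalso
    have hstep := ht_step_true s (gmap s i) hsj
    have := h3 ↑(gmap s i) (Fin.lt_def.mp h1) (le_refl _)
    omega

lemma s_gmap_true {s : Fin m → Bool} (hs : PathOK 0 s) {i : Fin m} (hi : s i = false) :
    s (gmap s i) = true := by
  obtain ⟨h1, h2, h3, _⟩ := down_spec hs hi
  cases hsj : s (gmap s i)
  · exfalso
    have hstep := ht_step_false s (gmap s i) hsj
    have := h3 (↑(gmap s i)+1) (by omega) (Fin.lt_def.mp h1)
    omega
  · rfl

lemma gmap_invol {s : Fin m → Bool} (hs : PathOK 0 s) (i : Fin m) :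
    gmap s (gmap s i) = i := by
  cases hsi : s i
  · -- s i = false : j := gmap s i < i, s j = true
    obtain ⟨h1, h2, h3, _⟩ := down_spec hs hsi
    have hj := s_gmap_true hs hsi
    obtain ⟨g1, g2, g3, g4⟩ := up_spec hs hj
    have hle : gmap s (gmap s i) ≤ i := g4 i h1 (by rw [h2])
    rcases lt_or_eq_of_le hle with h | h
    · exfalso
      have hg1 := Fin.lt_def.mp g1
      have hh := Fin.lt_def.mp h
      have h5 := h3 (↑(gmap s (gmap s i))+1) (by omega) (by omega)
      omega
    · exact h
  · -- s i = true
    obtain ⟨h1, h2, h3, _⟩ := up_spec hs hsi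
    have hj := s_gmap_false hs hsi
    obtain ⟨g1, g2, g3, g4⟩ := down_spec hs hj
    have hle : i ≤ gmap s (gmap s i) := g4 i h1 (by rw [h2])
    rcases lt_or_eq_of_le hle with h | h
    · exfalso
      have := h3 ↑(gmap s (gmap s i)) (Fin.lt_def.mp h) (le_of_lt (Fin.lt_def.mp g1))
      omega
    · exact h.symm


-- Part C
lemma lt_gmap_iff {s : Fin m → Bool} (hs : PathOK 0 s) (i : Fin m) :
    i < gmap s i ↔ s i = true := by
  constructor
  · intro h
    cases hsi : s i
    · exact absurd ((down_spec hs hsi).1.trans h) (lt_irrefl _)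
    · rfl
  · intro h; exact (up_spec hs h).1

lemma gmap_isNCPairing {s : Fin m → Bool} (hs : PathOK 0 s) :
    IsNCPairing (gmap s) := by
  refine ⟨gmap_invol hs, ?_, ?_⟩
  · intro i
    cases hsi : s i
    · exact ne_of_lt (down_spec hs hsi).1
    · exact ne_of_gt (up_spec hs hsi).1
  · intro i j h1 h2 h3
    have hsi : s i = true := by
      rw [← lt_gmap_iff hs]
      exact h1.trans h2
    have hsj : s j = true := by
      rw [← lt_gmap_iff hs]
      exact h2.trans h3
    obtain ⟨_, hji, strict_i, _⟩ := up_spec hs hsi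
    obtain ⟨_, hjj, strict_j, _⟩ := up_spec hs hsj
    have e1 : ht s ↑i < ht s ↑j :=
      strict_i ↑j (Fin.lt_def.mp h1) (le_of_lt (Fin.lt_def.mp h2))
    have h2' := Fin.lt_def.mp h2
    have h3' := Fin.lt_def.mp h3
    have e2 : ht s ↑j < ht s (↑(gmap s i)+1) :=
      strict_j (↑(gmap s i)+1) (by omega) (by omega)
    rw [hji] at e2
    omega

-- forward direction
def sOf (f : Fin m → Fin m) : Fin m → Bool := fun i => decide (i < f i)

def Str (f : Fin m → Fin m) (k : ℕ) : Finset (Fin m) :=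
  Finset.univ.filter fun j => (j:ℕ) < k ∧ j < f j ∧ k ≤ (f j : ℕ)

lemma ht_count (s : Fin m → Bool) (k : ℕ) :
    ht s k = ((Finset.univ.filter fun i : Fin m => (i:ℕ) < k ∧ s i = true).card : ℤ)
      - ((Finset.univ.filter fun i : Fin m => (i:ℕ) < k ∧ s i = false).card : ℤ) := by
  classical
  rw [ht, ← Finset.sum_filter]
  rw [← Finset.sum_filter_add_sum_filter_not
    (Finset.univ.filter fun i : Fin m => (i:ℕ) < k) (fun i => s i = true)]
  rw [Finset.filter_filter, Finset.filter_filter]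
  have h1 : ∀ i ∈ Finset.univ.filter fun i : Fin m => (i:ℕ) < k ∧ s i = true,
      (if s i then (1:ℤ) else -1) = 1 := by
    intro i hi
    simp only [Finset.mem_filter] at hi
    simp [hi.2.2]
  have h2 : ∀ i ∈ Finset.univ.filter fun i : Fin m => (i:ℕ) < k ∧ ¬ (s i = true),
      (if s i then (1:ℤ) else -1) = -1 := by
    intro i hi
    simp only [Finset.mem_filter] at hi
    simp [hi.2.2]
  rw [Finset.sum_congr rfl h1, Finset.sum_congr rfl h2]
  have h3 : (Finset.univ.filter fun i : Fin m => (i:ℕ) < k ∧ ¬ (s i = true))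
      = (Finset.univ.filter fun i : Fin m => (i:ℕ) < k ∧ s i = false) := by
    apply Finset.filter_congr
    intro i _
    simp
  rw [h3]
  simp [sub_eq_add_neg]

lemma ht_sOf {f : Fin m → Fin m} (hf : IsNCPairing f) (k : ℕ) :
    ht (sOf f) k = ((Str f k).card : ℤ) := by
  classical
  obtain ⟨hinv, hne, hnc⟩ := hf
  have hinj : Function.Injective f := by
    intro a b hab
    have := hinv a
    rw [hab, hinv b] at this
    exact this.symm
  rw [ht_count]
  have hU : (Finset.univ.filter fun i : Fin m => (i:ℕ) < k ∧ sOf f i = true)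
      = Finset.univ.filter fun i : Fin m => (i:ℕ) < k ∧ i < f i := by
    apply Finset.filter_congr
    intro i _
    simp [sOf]
  have hD : (Finset.univ.filter fun i : Fin m => (i:ℕ) < k ∧ sOf f i = false)
      = Finset.univ.filter fun i : Fin m => (i:ℕ) < k ∧ f i < i := by
    apply Finset.filter_congr
    intro i _
    simp only [sOf, decide_eq_false_iff_not, not_lt, and_congr_right_iff]
    intro _
    constructor
    · intro h; exact lt_of_le_of_ne h (hne i)
    · intro h; exact le_of_lt h
  rw [hU, hD]
  set C := Finset.univ.filter fun i : Fin m => (i:ℕ) < k ∧ i < f i ∧ (f i : ℕ) < k with hC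
  have hsplit : (Finset.univ.filter fun i : Fin m => (i:ℕ) < k ∧ i < f i).card
      = (Str f k).card + C.card := by
    rw [← Finset.card_filter_add_card_filter_not
      (s := Finset.univ.filter fun i : Fin m => (i:ℕ) < k ∧ i < f i)
      (p := fun j => k ≤ (f j : ℕ))]
    congr 1
    · rw [Finset.filter_filter]
      unfold Str
      congr 1
      ext i
      simp only [Finset.mem_filter, Finset.mem_univ, true_and]
      constructor
      · rintro ⟨⟨h1, h2⟩, h3⟩; exact ⟨h1, h2, h3⟩
      · rintro ⟨h1, h2, h3⟩; exact ⟨⟨h1, h2⟩, h3⟩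
    · rw [Finset.filter_filter, hC]
      congr 1
      ext i
      simp only [Finset.mem_filter, Finset.mem_univ, true_and, not_le]
      constructor
      · rintro ⟨⟨h1, h2⟩, h3⟩; exact ⟨h1, h2, by omega⟩
      · rintro ⟨h1, h2, h3⟩; exact ⟨⟨h1, h2⟩, by omega⟩
  have hDC : (Finset.univ.filter fun i : Fin m => (i:ℕ) < k ∧ f i < i).card = C.card := by
    apply Finset.card_bij' (i := fun j _ => f j) (j := fun x _ => f x)
    · intro a ha
      simp only [Finset.mem_filter, Finset.mem_univ, true_and] at ha ⊢
      rw [hC]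
      simp only [Finset.mem_filter, Finset.mem_univ, true_and, hinv]
      have : (f a : ℕ) < (a : ℕ) := Fin.lt_def.mp ha.2
      exact ⟨by omega, ha.2, ha.1⟩
    · intro x hx
      rw [hC] at hx
      simp only [Finset.mem_filter, Finset.mem_univ, true_and] at hx ⊢
      rw [hinv]
      exact ⟨hx.2.2, hx.2.1⟩
    · intro a _; exact hinv a
    · intro x _; exact hinv x
  rw [hsplit, hDC]
  push_cast
  ring

lemma pathOK_sOf {f : Fin m → Fin m} (hf : IsNCPairing f) : PathOK 0 (sOf f) := by
  constructor
  · intro k _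
    rw [ht_sOf hf]
    positivity
  · rw [ht_sOf hf]
    have : Str f m = ∅ := by
      apply Finset.filter_false_of_mem
      intro j _
      rintro ⟨_, _, h⟩
      exact absurd h (by have := (f j).isLt; omega)
    rw [this]
    simp

end Stmt7Aux

namespace Stmt7Aux
variable {m : ℕ}

lemma str_mem_gt {f : Fin m → Fin m} (hf : IsNCPairing f) {l : Fin m} (hl : l < f l)
    {j : Fin m} (h1 : (j:ℕ) < (l:ℕ)) (h2 : j < f j) (h3 : (l:ℕ) ≤ ((f j):ℕ)) :
    f l < f j := by
  obtain ⟨hinv, hne, hnc⟩ := hf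
  have hjl : j < l := Fin.lt_def.mpr h1
  have hfjl : f j ≠ l := by
    intro h
    have : j = f l := by rw [← h, hinv]
    rw [this] at hjl
    exact absurd (hl.trans hjl) (lt_irrefl _)
  have hlfj : l < f j := lt_of_le_of_ne (Fin.le_def.mpr h3) (fun h => hfjl h.symm)
  by_contra hcon
  push_neg at hcon
  rcases lt_or_eq_of_le hcon with h | h
  · exact hnc j l hjl hlfj h
  · have : j = l := by
      have := hinv j
      rw [h, hinv] at this
      exact this.symm
    exact absurd this (ne_of_lt hjl)

lemma str_left {f : Fin m → Fin m} (hf : IsNCPairing f) {l : Fin m} (hl : l < f l) :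
    Str f ↑l = Finset.univ.filter (fun j => j < f j ∧ j < l ∧ f l < f j) := by
  ext j
  simp only [Str, Finset.mem_filter, Finset.mem_univ, true_and]
  constructor
  · rintro ⟨h1, h2, h3⟩
    exact ⟨h2, Fin.lt_def.mpr h1, str_mem_gt hf hl h1 h2 h3⟩
  · rintro ⟨h1, h2, h3⟩
    refine ⟨Fin.lt_def.mp h2, h1, ?_⟩
    have := Fin.lt_def.mp (hl.trans h3)
    omega

lemma str_right {f : Fin m → Fin m} (hf : IsNCPairing f) {l : Fin m} (hl : l < f l) :
    Str f (↑(f l)+1) = Str f ↑l := by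
  obtain ⟨hinv, hne, hnc⟩ := hf
  ext j
  simp only [Str, Finset.mem_filter, Finset.mem_univ, true_and]
  constructor
  · rintro ⟨h1, h2, h3⟩
    have hflfj : f l < f j := by
      refine Fin.lt_def.mpr ?_
      omega
    have hjne : j ≠ l := by
      intro h; rw [h] at hflfj; exact absurd hflfj (lt_irrefl _)
    have hjnefl : j ≠ f l := by
      intro h
      have : f j = l := by rw [h, hinv]
      rw [this] at h2
      have := Fin.lt_def.mp (h2.trans hl)
      omega
    have hjl : j < l := by
      rcases lt_trichotomy j l with h | h | h
      · exact h
      · exact absurd h hjne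
      · exfalso
        have hjfl : j < f l := by
          refine Fin.lt_def.mpr ?_
          have := Fin.val_ne_of_ne hjnefl
          omega
        exact hnc l j h hjfl hflfj
    refine ⟨Fin.lt_def.mp hjl, h2, ?_⟩
    have := Fin.lt_def.mp (hl.trans hflfj)
    have := Fin.lt_def.mp hflfj
    have := Fin.lt_def.mp hl
    omega
  · rintro ⟨h1, h2, h3⟩
    have h4 := str_mem_gt ⟨hinv, hne, hnc⟩ hl h1 h2 h3
    have := Fin.lt_def.mp h4
    have := Fin.lt_def.mp hl
    refine ⟨by omega, h2, by omega⟩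

lemma str_insert {f : Fin m → Fin m} (hf : IsNCPairing f) {l : Fin m} (hl : l < f l)
    {j0 : ℕ} (h1 : (l:ℕ) < j0) (h2 : j0 < ((f l):ℕ)) :
    (Str f ↑l).card + 1 ≤ (Str f (j0+1)).card := by
  classical
  have hsub : insert l (Str f ↑l) ⊆ Str f (j0+1) := by
    intro x hx
    rcases Finset.mem_insert.mp hx with h | h
    · subst h
      simp only [Str, Finset.mem_filter, Finset.mem_univ, true_and]
      exact ⟨by omega, hl, by omega⟩
    · simp only [Str, Finset.mem_filter, Finset.mem_univ, true_and] at h ⊢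
      obtain ⟨g1, g2, g3⟩ := h
      have := Fin.lt_def.mp (str_mem_gt hf hl g1 g2 g3)
      refine ⟨by omega, g2, by omega⟩
  have hnotmem : l ∉ Str f ↑l := by
    simp only [Str, Finset.mem_filter, Finset.mem_univ, true_and]
    rintro ⟨h, _⟩
    omega
  calc (Str f ↑l).card + 1 = (insert l (Str f ↑l)).card := by
        rw [Finset.card_insert_of_notMem hnotmem]
    _ ≤ (Str f (j0+1)).card := Finset.card_le_card hsub

lemma gmap_sOf_up {f : Fin m → Fin m} (hf : IsNCPairing f) {i : Fin m} (hi : i < f i) :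
    gmap (sOf f) i = f i := by
  have hs := pathOK_sOf hf
  have hsi : sOf f i = true := by simp [sOf, hi]
  obtain ⟨g1, g2, _, g4⟩ := up_spec hs hsi
  have hfi_ht : ht (sOf f) (↑(f i)+1) = ht (sOf f) ↑i := by
    rw [ht_sOf hf, ht_sOf hf, str_right hf hi]
  have hle : gmap (sOf f) i ≤ f i := g4 (f i) hi hfi_ht
  rcases lt_or_eq_of_le hle with h | h
  · exfalso
    have hcard : (Str f (↑(gmap (sOf f) i)+1)).card = (Str f ↑i).card := by
      have := g2
      rw [ht_sOf hf, ht_sOf hf] at this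
      exact_mod_cast this
    have := str_insert hf hi (Fin.lt_def.mp g1) (Fin.lt_def.mp h)
    omega
  · exact h

lemma gmap_sOf {f : Fin m → Fin m} (hf : IsNCPairing f) : gmap (sOf f) = f := by
  funext i
  rcases lt_or_gt_of_ne (hf.2.1 i).symm with h | h
  · -- i < f i
    exact gmap_sOf_up hf h
  · -- f i < i
    have hup : f i < f (f i) := by rw [hf.1]; exact h
    have h5 := gmap_sOf_up hf hup
    rw [hf.1] at h5
    have := gmap_invol (pathOK_sOf hf) (f i)
    rw [h5] at this
    exact this

lemma sOf_gmap {s : Fin m → Bool} (hs : PathOK 0 s) : sOf (gmap s) = s := by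
  funext i
  cases hsi : s i
  · exact decide_eq_false (not_lt.mpr (le_of_lt (down_spec hs hsi).1))
  · exact decide_eq_true (up_spec hs hsi).1

lemma blockDepth_eq {f : Fin m → Fin m} (hf : IsNCPairing f) {l : Fin m} (hl : l < f l) :
    blockDepth f l = (ht (sOf f) ↑l).toNat := by
  rw [ht_sOf hf, Int.toNat_natCast, blockDepth, ← str_left hf hl]

end Stmt7Aux

namespace Stmt7Aux
variable {m : ℕ}

def pweightN (lam : ℕ → ℝ) (n : ℕ) (s : Fin m → Bool) : ℝ :=
  ∏ i : Fin m, if s i then lam (((n:ℤ) + ht s ↑i).toNat) else 1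

def pathSum (lam : ℕ → ℝ) (m n : ℕ) : ℝ :=
  ∑ s ∈ Finset.univ.filter (PathOK (m := m) n), pweightN lam n s

def NCweight (lam : ℕ → ℝ) (f : Fin m → Fin m) : ℝ :=
  ∏ l ∈ leftLegs f, lam (blockDepth f l)

lemma weight_eq (lam : ℕ → ℝ) {f : Fin m → Fin m} (hf : IsNCPairing f) :
    NCweight lam f = pweightN lam 0 (sOf f) := by
  unfold NCweight pweightN leftLegs
  rw [Finset.prod_filter]
  apply Finset.prod_congr rfl
  intro i _
  by_cases h : i < f i
  · rw [if_pos h, if_pos (by simp [sOf, h]), blockDepth_eq hf h]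
    norm_num
  · rw [if_neg h, if_neg (by simp [sOf, h])]

lemma sum_nc_eq_pathSum (lam : ℕ → ℝ) :
    ∑ f ∈ Finset.univ.filter (IsNCPairing (m := m)), NCweight lam f = pathSum lam m 0 := by
  classical
  rw [pathSum]
  refine Finset.sum_nbij' (i := sOf) (j := gmap) ?_ ?_ ?_ ?_ ?_
  · intro f hf
    simp only [Finset.mem_filter, Finset.mem_univ, true_and] at hf ⊢
    exact pathOK_sOf hf
  · intro s hs
    simp only [Finset.mem_filter, Finset.mem_univ, true_and] at hs ⊢
    exact gmap_isNCPairing hs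
  · intro f hf
    simp only [Finset.mem_filter, Finset.mem_univ, true_and] at hf
    exact gmap_sOf hf
  · intro s hs
    simp only [Finset.mem_filter, Finset.mem_univ, true_and] at hs
    exact sOf_gmap hs
  · intro f hf
    simp only [Finset.mem_filter, Finset.mem_univ, true_and] at hf
    exact weight_eq lam hf

lemma ht_cons (b : Bool) (t : Fin m → Bool) (k : ℕ) :
    ht (Fin.cons b t : Fin (m+1) → Bool) (k+1) = (if b then 1 else -1) + ht t k := by
  unfold ht
  rw [Fin.sum_univ_succ]
  congr 1
  · simp

lemma pathOK_cons_true {t : Fin m → Bool} {n : ℕ} :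
    PathOK n (Fin.cons true t : Fin (m+1) → Bool) ↔ PathOK (n+1) t := by
  have hht : ∀ k, ht (Fin.cons true t : Fin (m+1) → Bool) (k+1) = 1 + ht t k := by
    intro k; rw [ht_cons]; simp
  unfold PathOK
  constructor
  · rintro ⟨h1, h2⟩
    rw [hht] at h2
    refine ⟨?_, by push_cast; omega⟩
    intro k hk
    have := h1 (k+1) (by omega)
    rw [hht] at this
    push_cast
    omega
  · rintro ⟨h1, h2⟩
    push_cast at h1 h2
    refine ⟨?_, by rw [hht]; omega⟩
    intro k hk
    cases k with
    | zero => rw [ht_zero]; omega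
    | succ j =>
      rw [hht]
      have := h1 j (by omega)
      omega

lemma pathOK_cons_false {t : Fin m → Bool} {n : ℕ} :
    PathOK n (Fin.cons false t : Fin (m+1) → Bool) ↔ (1 ≤ n ∧ PathOK (n-1) t) := by
  have hht : ∀ k, ht (Fin.cons false t : Fin (m+1) → Bool) (k+1) = -1 + ht t k := by
    intro k; rw [ht_cons]; simp
  unfold PathOK
  constructor
  · rintro ⟨h1, h2⟩
    have hn : 1 ≤ n := by
      have := h1 1 (by omega)
      rw [hht, ht_zero] at this
      omega
    have hcast : ((n - 1 : ℕ) : ℤ) = (n:ℤ) - 1 := by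
      rw [Nat.cast_sub hn]; norm_num
    rw [hht] at h2
    refine ⟨hn, ?_, by rw [hcast]; omega⟩
    intro k hk
    have := h1 (k+1) (by omega)
    rw [hht] at this
    rw [hcast]
    omega
  · rintro ⟨hn, h1, h2⟩
    have hcast : ((n - 1 : ℕ) : ℤ) = (n:ℤ) - 1 := by
      rw [Nat.cast_sub hn]; norm_num
    rw [hcast] at h1 h2
    refine ⟨?_, by rw [hht]; omega⟩
    intro k hk
    cases k with
    | zero => rw [ht_zero]; omega
    | succ j =>
      rw [hht]
      have := h1 j (by omega)
      omega

lemma pweightN_cons_true (lam : ℕ → ℝ) (n : ℕ) (t : Fin m → Bool) :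
    pweightN lam n (Fin.cons true t : Fin (m+1) → Bool) = lam n * pweightN lam (n+1) t := by
  unfold pweightN
  rw [Fin.prod_univ_succ]
  congr 1
  · rw [Fin.cons_zero, if_pos rfl]
    have h0 : ((0 : Fin (m+1)) : ℕ) = 0 := rfl
    rw [h0, ht_zero]
    norm_num
  · apply Finset.prod_congr rfl
    intro i _
    rw [Fin.cons_succ]
    have harg : ((n:ℤ) + ht (Fin.cons true t : Fin (m+1) → Bool) ↑(i.succ))
        = (((n+1:ℕ)):ℤ) + ht t ↑i := by
      rw [Fin.val_succ, ht_cons]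
      push_cast
      simp only [if_true]
      ring
    rw [harg]

lemma pweightN_cons_false (lam : ℕ → ℝ) {n : ℕ} (hn : 1 ≤ n) (t : Fin m → Bool) :
    pweightN lam n (Fin.cons false t : Fin (m+1) → Bool) = pweightN lam (n-1) t := by
  unfold pweightN
  rw [Fin.prod_univ_succ]
  rw [Fin.cons_zero, if_neg (by simp), one_mul]
  apply Finset.prod_congr rfl
  intro i _
  rw [Fin.cons_succ]
  have harg : ((n:ℤ) + ht (Fin.cons false t : Fin (m+1) → Bool) ↑(i.succ))
      = (((n-1:ℕ)):ℤ) + ht t ↑i := by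
    rw [Fin.val_succ, ht_cons, Nat.cast_sub hn]
    push_cast
    ring
  rw [harg]

lemma pathSum_succ (lam : ℕ → ℝ) (n : ℕ) :
    pathSum lam (m+1) n = lam n * pathSum lam m (n+1)
      + (if n = 0 then 0 else pathSum lam m (n-1)) := by
  classical
  rw [pathSum, Finset.sum_filter]
  have hequiv := Fintype.sum_equiv (Fin.consEquiv (fun _ : Fin (m+1) => Bool))
    (fun x : Bool × (Fin m → Bool) =>
      if PathOK n (Fin.cons x.1 x.2 : Fin (m+1) → Bool)
      then pweightN lam n (Fin.cons x.1 x.2 : Fin (m+1) → Bool) else 0)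
    (fun s : Fin (m+1) → Bool => if PathOK n s then pweightN lam n s else 0)
    (fun x => rfl)
  rw [← hequiv, Fintype.sum_prod_type, Fintype.sum_bool]
  congr 1
  · rw [pathSum, Finset.sum_filter, Finset.mul_sum]
    apply Finset.sum_congr rfl
    intro t _
    by_cases h : PathOK (m := m) (n+1) t
    · rw [if_pos (pathOK_cons_true.mpr h), if_pos h, pweightN_cons_true]
    · rw [if_neg (fun hP => h (pathOK_cons_true.mp hP)), if_neg h, mul_zero]
  · by_cases hn : n = 0
    · subst hn
      rw [if_pos rfl]
      apply Finset.sum_eq_zero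
      intro t _
      rw [if_neg]
      intro hP
      exact absurd (pathOK_cons_false.mp hP).1 (by omega)
    · rw [if_neg hn, pathSum, Finset.sum_filter]
      apply Finset.sum_congr rfl
      intro t _
      by_cases h : PathOK (m := m) (n-1) t
      · rw [if_pos (pathOK_cons_false.mpr ⟨by omega, h⟩), if_pos h,
          pweightN_cons_false lam (by omega)]
      · rw [if_neg (fun hP => h (pathOK_cons_false.mp hP).2), if_neg h]

lemma pathSum_zero (lam : ℕ → ℝ) (n : ℕ) :
    pathSum lam 0 n = if n = 0 then 1 else 0 := by
  classical
  have hw : ∀ s : Fin 0 → Bool, pweightN lam n s = 1 := by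
    intro s; unfold pweightN; simp
  have hOK : ∀ s : Fin 0 → Bool, PathOK (m := 0) n s ↔ n = 0 := by
    intro s
    unfold PathOK
    constructor
    · rintro ⟨_, h2⟩
      rw [ht_zero] at h2
      omega
    · rintro rfl
      exact ⟨fun k hk => by interval_cases k; simp [ht_zero], by simp [ht_zero]⟩
  by_cases hn : n = 0
  · subst hn
    rw [if_pos rfl, pathSum]
    rw [Finset.filter_true_of_mem (fun s _ => (hOK s).mpr rfl)]
    rw [Finset.sum_congr rfl (fun s _ => hw s)]
    simp
  · rw [if_neg hn, pathSum]
    rw [Finset.filter_false_of_mem (fun s _ => fun hP => hn ((hOK s).mp hP))]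
    simp

end Stmt7Aux

namespace Stmt7Aux

noncomputable def Cmom (lam : ℕ → ℝ) : ℕ → ℕ → ℝ
  | 0 => fun k => if k = 0 then 1 else 0
  | m+1 => fun k => Real.sqrt (lam k) * Cmom lam m (k+1) +
      (if k = 0 then 0 else Real.sqrt (lam (k-1)) * Cmom lam m (k-1))

lemma Cmom_zero (lam : ℕ → ℝ) (k : ℕ) : Cmom lam 0 k = if k = 0 then 1 else 0 := rfl

lemma Cmom_succ (lam : ℕ → ℝ) (m k : ℕ) :
    Cmom lam (m+1) k = Real.sqrt (lam k) * Cmom lam m (k+1) +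
      (if k = 0 then 0 else Real.sqrt (lam (k-1)) * Cmom lam m (k-1)) := rfl

lemma pathSum_eq_Cmom (lam : ℕ → ℝ) (hlam : ∀ j, 0 ≤ lam j) :
    ∀ M k : ℕ, (∏ j ∈ Finset.range k, Real.sqrt (lam j)) * pathSum lam M k
      = Cmom lam M k := by
  intro M
  induction M with
  | zero =>
    intro k
    rw [pathSum_zero]
    by_cases h : k = 0 <;> simp [Cmom_zero, h]
  | succ M ih =>
    intro k
    rw [pathSum_succ]
    rw [Cmom_succ, mul_add]
    congr 1
    · rw [← ih (k+1), Finset.prod_range_succ]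
      have hs : Real.sqrt (lam k) * Real.sqrt (lam k) = lam k := Real.mul_self_sqrt (hlam k)
      linear_combination (∏ j ∈ Finset.range k, Real.sqrt (lam j)) * pathSum lam M (k+1) * hs.symm
    · by_cases h : k = 0
      · simp [h]
      · rw [if_neg h, if_neg h, ← ih (k-1)]
        have hk : k - 1 + 1 = k := by omega
        have hsplit : (∏ j ∈ Finset.range k, Real.sqrt (lam j))
            = (∏ j ∈ Finset.range (k-1), Real.sqrt (lam j)) * Real.sqrt (lam (k-1)) := by
          conv_lhs => rw [← hk]
          rw [Finset.prod_range_succ]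
        rw [hsplit]
        ring

lemma pathSum_eq_Cmom_zero (lam : ℕ → ℝ) (hlam : ∀ j, 0 ≤ lam j) (M : ℕ) :
    pathSum lam M 0 = Cmom lam M 0 := by
  have := pathSum_eq_Cmom lam hlam M 0
  simpa using this

lemma pathSum_six (lam : ℕ → ℝ) :
    pathSum lam 6 0
      = lam 0 * (lam 1 * (lam 2 + lam 1 + lam 0) + lam 0 * (lam 1 + lam 0)) := by
  have q00 : pathSum lam 0 0 = 1 := by rw [pathSum_zero]; norm_num
  have q02 : pathSum lam 0 2 = 0 := by rw [pathSum_zero]; norm_num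
  have q04 : pathSum lam 0 4 = 0 := by rw [pathSum_zero]; norm_num
  have q06 : pathSum lam 0 6 = 0 := by rw [pathSum_zero]; norm_num
  have q11 : pathSum lam 1 1 = 1 := by
    have := pathSum_succ (m := 0) lam 1
    norm_num [q02, q00] at this
    exact this
  have q13 : pathSum lam 1 3 = 0 := by
    have := pathSum_succ (m := 0) lam 3
    norm_num [q04, q02] at this
    exact this
  have q15 : pathSum lam 1 5 = 0 := by
    have := pathSum_succ (m := 0) lam 5
    norm_num [q06, q04] at this
    exact this
  have q20 : pathSum lam 2 0 = lam 0 := by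
    have := pathSum_succ (m := 1) lam 0
    norm_num [q11] at this
    exact this
  have q22 : pathSum lam 2 2 = 1 := by
    have := pathSum_succ (m := 1) lam 2
    norm_num [q13, q11] at this
    exact this
  have q24 : pathSum lam 2 4 = 0 := by
    have := pathSum_succ (m := 1) lam 4
    norm_num [q15, q13] at this
    exact this
  have q31 : pathSum lam 3 1 = lam 1 + lam 0 := by
    have := pathSum_succ (m := 2) lam 1
    norm_num [q22, q20] at this
    exact this
  have q33 : pathSum lam 3 3 = 1 := by
    have := pathSum_succ (m := 2) lam 3
    norm_num [q24, q22] at this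
    exact this
  have q40 : pathSum lam 4 0 = lam 0 * (lam 1 + lam 0) := by
    have := pathSum_succ (m := 3) lam 0
    norm_num [q31] at this
    exact this
  have q42 : pathSum lam 4 2 = lam 2 + (lam 1 + lam 0) := by
    have := pathSum_succ (m := 3) lam 2
    norm_num [q33, q31] at this
    exact this
  have q51 : pathSum lam 5 1 = lam 1 * (lam 2 + (lam 1 + lam 0)) + lam 0 * (lam 1 + lam 0) := by
    have := pathSum_succ (m := 4) lam 1
    norm_num [q42, q40] at this
    exact this
  have q60 : pathSum lam 6 0
      = lam 0 * (lam 1 * (lam 2 + (lam 1 + lam 0)) + lam 0 * (lam 1 + lam 0)) := by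
    have := pathSum_succ (m := 5) lam 0
    norm_num [q51] at this
    exact this
  rw [q60]
  ring

end Stmt7Aux


namespace Stmt7Aux

variable {H : Type} [NormedAddCommGroup H] [InnerProductSpace ℂ H] [CompleteSpace H]

lemma dense_ext {r : ℕ} (e : Fin r × List (Fin r) → H)
    (hdense : (Submodule.span ℂ (Set.range e)).topologicalClosure = ⊤)
    {v w : H} (h : ∀ z, (inner ℂ (e z) v : ℂ) = inner ℂ (e z) w) : v = w := by
  have hbot : (Submodule.span ℂ (Set.range e))ᗮ = ⊥ :=
    Submodule.topologicalClosure_eq_top_iff.mp hdense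
  have hsub : v - w ∈ (Submodule.span ℂ (Set.range e))ᗮ := by
    rw [Submodule.mem_orthogonal]
    intro u hu
    induction hu using Submodule.span_induction with
    | mem x hx =>
      obtain ⟨z, rfl⟩ := hx
      rw [inner_sub_right, h z, sub_self]
    | zero => exact inner_zero_left _
    | add x y hx hy ihx ihy => rw [inner_add_left, ihx, ihy, add_zero]
    | smul a x hx ihx => rw [inner_smul_left, ihx, mul_zero]
  rw [hbot, Submodule.mem_bot] at hsub
  exact sub_eq_zero.mp hsub

variable {r : ℕ} {b : Fin r → Fin r → ℝ} {e : Fin r × List (Fin r) → H}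
  {c : Fin r → Fin r → H →L[ℂ] H}

lemma adj_apply_nil (he : Orthonormal ℂ e)
    (hdense : (Submodule.span ℂ (Set.range e)).topologicalClosure = ⊤)
    (hc : ∀ i j x, c i j (e x) =
      if actsOn j x then (Real.sqrt (b i j) : ℂ) • e (x.1, i :: x.2) else 0)
    (i j : Fin r) (s₀ : Fin r) :
    adjoint (c i j) (e (s₀, ([] : List (Fin r)))) = 0 := by
  apply dense_ext e hdense
  intro z
  rw [ContinuousLinearMap.adjoint_inner_right, hc, inner_zero_right]
  by_cases hz : actsOn j z = true
  · rw [if_pos hz, inner_smul_left, orthonormal_iff_ite.mp he]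
    rw [if_neg (by simp)]
    simp
  · rw [if_neg hz, inner_zero_left]

lemma adj_apply_cons (he : Orthonormal ℂ e)
    (hdense : (Submodule.span ℂ (Set.range e)).topologicalClosure = ⊤)
    (hc : ∀ i j x, c i j (e x) =
      if actsOn j x then (Real.sqrt (b i j) : ℂ) • e (x.1, i :: x.2) else 0)
    (i j : Fin r) (s₀ a : Fin r) (w : List (Fin r)) :
    adjoint (c i j) (e (s₀, a :: w)) =
      if a = i ∧ actsOn j (s₀, w) = true then (Real.sqrt (b i j) : ℂ) • e (s₀, w) else 0 := by
  apply dense_ext e hdense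
  intro z
  obtain ⟨z1, z2⟩ := z
  rw [ContinuousLinearMap.adjoint_inner_right, hc]
  have hite := orthonormal_iff_ite.mp he
  by_cases hz : actsOn j (z1, z2) = true
  · rw [if_pos hz, inner_smul_left, hite, Complex.conj_ofReal]
    by_cases hcond : a = i ∧ actsOn j (s₀, w) = true
    · rw [if_pos hcond, inner_smul_right, hite]
      by_cases hzw : (z1, z2) = (s₀, w)
      · rw [if_pos hzw, if_pos]
        have hz1 : z1 = s₀ := (Prod.mk.injEq _ _ _ _ ▸ hzw).1
        have hz2 : z2 = w := (Prod.mk.injEq _ _ _ _ ▸ hzw).2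
        rw [hz1, hz2, hcond.1]
      · rw [if_neg hzw, if_neg, mul_zero]
        intro hcontra
        apply hzw
        have h1 : z1 = s₀ := (Prod.mk.injEq _ _ _ _ ▸ hcontra).1
        have h2 : i :: z2 = a :: w := (Prod.mk.injEq _ _ _ _ ▸ hcontra).2
        have h3 : z2 = w := (List.cons.injEq _ _ _ _ ▸ h2).2
        rw [h1, h3]
    · rw [if_neg hcond, inner_zero_right, if_neg, mul_zero]
      intro hcontra
      apply hcond
      have h1 : z1 = s₀ := (Prod.mk.injEq _ _ _ _ ▸ hcontra).1
      have h2 : i :: z2 = a :: w := (Prod.mk.injEq _ _ _ _ ▸ hcontra).2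
      have h2a : i = a := (List.cons.injEq _ _ _ _ ▸ h2).1
      have h3 : z2 = w := (List.cons.injEq _ _ _ _ ▸ h2).2
      refine ⟨h2a.symm, ?_⟩
      rw [← h1, ← h3]
      exact hz
  · rw [if_neg hz, inner_zero_left]
    by_cases hcond : a = i ∧ actsOn j (s₀, w) = true
    · rw [if_pos hcond, inner_smul_right, hite, if_neg, mul_zero]
      intro hzw
      apply hz
      rw [hzw]
      exact hcond.2
    · rw [if_neg hcond, inner_zero_right]

def altL {r : ℕ} (p q : Fin r) : ℕ → List (Fin r)
  | 0 => []
  | n+1 => (if Even n then p else q) :: altL p q n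

def lamPQ (x y : ℝ) (n : ℕ) : ℝ := if Even n then x else y

lemma actsOn_q_altL {p q : Fin r} (hpq : p ≠ q) (k : ℕ) :
    actsOn q (q, altL p q k) = decide (Even k) := by
  cases k with
  | zero => simp [altL, actsOn]
  | succ j =>
    have hne : (p == q) = false := beq_eq_false_iff_ne.mpr hpq
    by_cases hj : Even j
    · have h1 : ¬ Even (j+1) := by simp [Nat.even_add_one, hj]
      simp [altL, actsOn, hj, h1, hne]
    · have h1 : Even (j+1) := Nat.even_add_one.mpr hj
      simp [altL, actsOn, hj, h1]

lemma actsOn_p_altL {p q : Fin r} (hpq : p ≠ q) (k : ℕ) :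
    actsOn p (q, altL p q k) = decide (¬ Even k) := by
  have hne : (q == p) = false := beq_eq_false_iff_ne.mpr (Ne.symm hpq)
  cases k with
  | zero => simp [altL, actsOn, hne]
  | succ j =>
    by_cases hj : Even j
    · have h1 : ¬ Even (j+1) := by simp [Nat.even_add_one, hj]
      simp [altL, actsOn, hj, h1]
    · have h1 : Even (j+1) := Nat.even_add_one.mpr hj
      simp [altL, actsOn, hj, h1, hne]

end Stmt7Aux

namespace Stmt7Aux

variable {H : Type} [NormedAddCommGroup H] [InnerProductSpace ℂ H] [CompleteSpace H]
variable {r : ℕ} {b : Fin r → Fin r → ℝ} {e : Fin r × List (Fin r) → H}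
  {c : Fin r → Fin r → H →L[ℂ] H}

lemma omega_step (he : Orthonormal ℂ e)
    (hdense : (Submodule.span ℂ (Set.range e)).topologicalClosure = ⊤)
    (hc : ∀ i j x, c i j (e x) =
      if actsOn j x then (Real.sqrt (b i j) : ℂ) • e (x.1, i :: x.2) else 0)
    {om : Fin r → Fin r → H →L[ℂ] H}
    (hom : ∀ i j, om i j = c i j + adjoint (c i j))
    {p q : Fin r} (hpq : p ≠ q) (n : ℕ) :
    (om p q + om q p) (e (q, altL p q n))
      = (Real.sqrt (lamPQ (b p q) (b q p) n) : ℂ) • e (q, altL p q (n+1))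
        + (if n = 0 then 0 else
            (Real.sqrt (lamPQ (b p q) (b q p) (n-1)) : ℂ) • e (q, altL p q (n-1))) := by
  rw [hom, hom]
  simp only [ContinuousLinearMap.add_apply]
  have hT1 : c p q (e (q, altL p q n))
      = if Even n then (Real.sqrt (b p q) : ℂ) • e (q, p :: altL p q n) else 0 := by
    rw [hc, actsOn_q_altL hpq]
    by_cases h : Even n <;> simp [h]
  have hT2 : c q p (e (q, altL p q n))
      = if Even n then 0 else (Real.sqrt (b q p) : ℂ) • e (q, q :: altL p q n) := by
    rw [hc, actsOn_p_altL hpq]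
    by_cases h : Even n <;> simp [h]
  cases n with
  | zero =>
    have h3 := adj_apply_nil he hdense hc p q q
    have h4 := adj_apply_nil he hdense hc q p q
    rw [hT1, hT2]
    rw [show altL p q 0 = ([] : List (Fin r)) from rfl, h3, h4]
    simp [lamPQ, altL]
  | succ k =>
    have haL : altL p q (k+1) = (if Even k then p else q) :: altL p q k := rfl
    by_cases hk : Even k
    · have h3 : adjoint (c p q) (e (q, altL p q (k+1)))
          = (Real.sqrt (b p q) : ℂ) • e (q, altL p q k) := by
        rw [haL, if_pos hk, adj_apply_cons he hdense hc, if_pos]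
        exact ⟨rfl, by rw [actsOn_q_altL hpq]; simpa using hk⟩
      have h4 : adjoint (c q p) (e (q, altL p q (k+1))) = 0 := by
        rw [haL, if_pos hk, adj_apply_cons he hdense hc, if_neg]
        rintro ⟨h, _⟩
        exact hpq h
      have hkn : ¬ Even (k+1) := by simp [Nat.even_add_one, hk]
      rw [hT1, hT2, h3, h4, if_neg hkn, if_neg hkn]
      have e1 : altL p q (k+2) = q :: altL p q (k+1) := by
        rw [show altL p q (k+2) = (if Even (k+1) then p else q) :: altL p q (k+1) from rfl,
          if_neg hkn]
      have e2 : lamPQ (b p q) (b q p) (k+1) = b q p := by rw [lamPQ, if_neg hkn]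
      have e3 : lamPQ (b p q) (b q p) k = b p q := by rw [lamPQ, if_pos hk]
      rw [e1, e2, if_neg (Nat.succ_ne_zero k)]
      simp only [Nat.add_sub_cancel]
      rw [e3]
      abel
    · have h3 : adjoint (c p q) (e (q, altL p q (k+1))) = 0 := by
        rw [haL, if_neg hk, adj_apply_cons he hdense hc, if_neg]
        rintro ⟨h, _⟩
        exact hpq h.symm
      have h4 : adjoint (c q p) (e (q, altL p q (k+1)))
          = (Real.sqrt (b q p) : ℂ) • e (q, altL p q k) := by
        rw [haL, if_neg hk, adj_apply_cons he hdense hc, if_pos]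
        exact ⟨rfl, by rw [actsOn_p_altL hpq]; simpa using hk⟩
      have hkn : Even (k+1) := Nat.even_add_one.mpr hk
      rw [hT1, hT2, h3, h4, if_pos hkn, if_pos hkn]
      have e1 : altL p q (k+2) = p :: altL p q (k+1) := by
        rw [show altL p q (k+2) = (if Even (k+1) then p else q) :: altL p q (k+1) from rfl,
          if_pos hkn]
      have e2 : lamPQ (b p q) (b q p) (k+1) = b p q := by rw [lamPQ, if_pos hkn]
      have e3 : lamPQ (b p q) (b q p) k = b q p := by rw [lamPQ, if_neg hk]
      rw [e1, e2, if_neg (Nat.succ_ne_zero k)]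
      simp only [Nat.add_sub_cancel]
      rw [e3]
      abel

lemma omega_selfadj {om : Fin r → Fin r → H →L[ℂ] H}
    (hom : ∀ i j, om i j = c i j + adjoint (c i j)) (p q : Fin r) :
    adjoint (om p q + om q p) = om p q + om q p := by
  rw [map_add, hom, hom, map_add, map_add, adjoint_adjoint, adjoint_adjoint]
  abel

lemma altL_eq_nil_iff {p q : Fin r} (k : ℕ) : altL p q k = [] ↔ k = 0 := by
  cases k with
  | zero => simp [altL]
  | succ j => simp [altL]

lemma moment_eq (he : Orthonormal ℂ e)
    (hdense : (Submodule.span ℂ (Set.range e)).topologicalClosure = ⊤)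
    (hc : ∀ i j x, c i j (e x) =
      if actsOn j x then (Real.sqrt (b i j) : ℂ) • e (x.1, i :: x.2) else 0)
    {om : Fin r → Fin r → H →L[ℂ] H}
    (hom : ∀ i j, om i j = c i j + adjoint (c i j))
    {p q : Fin r} (hpq : p ≠ q) :
    ∀ M k : ℕ,
      (inner ℂ (e (q, altL p q k)) (((om p q + om q p) ^ M) (e (q, ([] : List (Fin r))))) : ℂ)
        = ((Cmom (lamPQ (b p q) (b q p)) M k : ℝ) : ℂ) := by
  intro M
  induction M with
  | zero =>
    intro k
    rw [pow_zero, ContinuousLinearMap.one_apply, orthonormal_iff_ite.mp he, Cmom_zero]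
    by_cases hk : k = 0
    · subst hk
      rw [show altL p q 0 = ([] : List (Fin r)) from rfl, if_pos rfl, if_pos rfl]
      norm_num
    · rw [if_neg, if_neg hk]
      · norm_num
      · intro hcontra
        apply hk
        have h2 : altL p q k = [] := congrArg Prod.snd hcontra
        exact (altL_eq_nil_iff k).mp h2
  | succ M ih =>
    intro k
    rw [pow_succ', ContinuousLinearMap.mul_apply, ← ContinuousLinearMap.adjoint_inner_left,
      omega_selfadj hom, omega_step he hdense hc hom hpq]
    by_cases hk : k = 0
    · subst hk
      rw [if_pos rfl, add_zero, inner_smul_left, Complex.conj_ofReal, ih 1, Cmom_succ,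
        if_pos rfl]
      push_cast
      ring
    · rw [if_neg hk, inner_add_left, inner_smul_left, inner_smul_left, Complex.conj_ofReal,
        Complex.conj_ofReal, ih (k+1), ih (k-1), Cmom_succ, if_neg hk]
      push_cast
      ring

lemma NCweight_split {m : ℕ} (x y : ℝ) (f : Fin m → Fin m) :
    NCweight (lamPQ x y) f
      = x ^ (evenDepthBlocks f).card * y ^ (oddDepthBlocks f).card := by
  classical
  rw [NCweight, ← Finset.prod_filter_mul_prod_filter_not (leftLegs f)
    (fun l => Even (blockDepth f l))]
  congr 1
  · calc ∏ l ∈ (leftLegs f).filter (fun l => Even (blockDepth f l)), lamPQ x y (blockDepth f l)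
        = ∏ _l ∈ (leftLegs f).filter (fun l => Even (blockDepth f l)), x :=
          Finset.prod_congr rfl (fun l hl => by
            rw [lamPQ, if_pos (Finset.mem_filter.mp hl).2])
      _ = x ^ (evenDepthBlocks f).card := by
          rw [Finset.prod_const]
          rfl
  · calc ∏ l ∈ (leftLegs f).filter (fun l => ¬ Even (blockDepth f l)), lamPQ x y (blockDepth f l)
        = ∏ _l ∈ (leftLegs f).filter (fun l => ¬ Even (blockDepth f l)), y :=
          Finset.prod_congr rfl (fun l hl => by
            rw [lamPQ, if_neg (Finset.mem_filter.mp hl).2])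
      _ = y ^ (oddDepthBlocks f).card := by
          rw [Finset.prod_const]
          rfl

end Stmt7Aux
/-- For `p ≠ q` and every `m`,
`Ψ_q(ω̂_{p,q}^m) = ∑_{π ∈ NC²_m} b_{p,q}^{|𝓑_o(π)|} b_{q,p}^{|𝓑_e(π)|}`,
where `𝓑_o(π)` are the blocks of depth `0,2,4,…` (contributing `b_{p,q}`) and `𝓑_e(π)`
those of depth `1,3,…` (contributing `b_{q,p}`); for odd `m` the sum is empty, so odd
moments vanish.  In particular, if `(b_{p,q}, b_{q,p}) = (d_p, d_q)` then
`Ψ_q(ω̂_{p,q}⁶) = d_p³ + 3 d_p² d_q + d_p d_q²`. -/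
theorem stmt7 {H : Type} [NormedAddCommGroup H] [InnerProductSpace ℂ H] [CompleteSpace H]
    (r : ℕ) (b : Fin r → Fin r → ℝ) (hb : ∀ i j, 0 ≤ b i j)
    (e : Fin r × List (Fin r) → H) (he : Orthonormal ℂ e)
    (hdense : (Submodule.span ℂ (Set.range e)).topologicalClosure = ⊤)
    (c : Fin r → Fin r → H →L[ℂ] H)
    (hc : ∀ i j x, c i j (e x) =
      if actsOn j x then (Real.sqrt (b i j) : ℂ) • e (x.1, i :: x.2) else 0)
    (om : Fin r → Fin r → H →L[ℂ] H)
    (hom : ∀ i j, om i j = c i j + adjoint (c i j))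
    (p q : Fin r) (hpq : p ≠ q)
    (d : Fin r → ℝ) (hbp : b p q = d p) (hbq : b q p = d q) :
    (∀ m : ℕ,
      (@inner ℂ H _ (e (q, ([] : List (Fin r)))) (((om p q + om q p) ^ m) (e (q, [])))) =
      ((∑ π : {f : Fin m → Fin m // IsNCPairing f},
        (b p q) ^ (evenDepthBlocks π.1).card * (b q p) ^ (oddDepthBlocks π.1).card : ℝ) : ℂ)) ∧
    (@inner ℂ H _ (e (q, ([] : List (Fin r)))) (((om p q + om q p) ^ 6) (e (q, [])))) =
      ((d p ^ 3 + 3 * d p ^ 2 * d q + d p * d q ^ 2 : ℝ) : ℂ) := by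
  classical
  set lam := Stmt7Aux.lamPQ (b p q) (b q p) with hlamdef
  have hlam : ∀ j', 0 ≤ lam j' := by
    intro j'
    rw [hlamdef, Stmt7Aux.lamPQ]
    split_ifs
    · exact hb p q
    · exact hb q p
  have key : ∀ M : ℕ,
      (@inner ℂ H _ (e (q, ([] : List (Fin r)))) (((om p q + om q p) ^ M) (e (q, []))))
        = ((Stmt7Aux.pathSum lam M 0 : ℝ) : ℂ) := by
    intro M
    rw [Stmt7Aux.pathSum_eq_Cmom_zero lam hlam M]
    exact Stmt7Aux.moment_eq he hdense hc hom hpq M 0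
  constructor
  · intro M
    rw [key M, Complex.ofReal_inj]
    rw [← Stmt7Aux.sum_nc_eq_pathSum lam]
    rw [Finset.sum_subtype (p := IsNCPairing (m := M))
      (Finset.univ.filter (IsNCPairing (m := M)))
      (fun f => by simp [Finset.mem_filter]) (fun f => Stmt7Aux.NCweight lam f)]
    apply Finset.sum_congr rfl
    intro π _
    exact Stmt7Aux.NCweight_split (b p q) (b q p) π.1
  · rw [key 6, Stmt7Aux.pathSum_six lam]
    have l0 : lam 0 = d p := by
      rw [hlamdef, Stmt7Aux.lamPQ, if_pos (by decide : Even 0), hbp]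
    have l1 : lam 1 = d q := by
      rw [hlamdef, Stmt7Aux.lamPQ, if_neg (by decide : ¬ Even 1), hbq]
    have l2 : lam 2 = d p := by
      rw [hlamdef, Stmt7Aux.lamPQ, if_pos (by decide : Even 2), hbp]
    rw [l0, l1, l2, Complex.ofReal_inj]
    ring
end

section
/- The moments of the sum $\omega = \sum_{p,q}\omega_{p,q}$ of collective matricially free Gaussian operators satisfy the recurrence $\Psi_q(\omega^{2m}) = \sum_{p=1}^{r}\sum_{k=0}^{m-1} b_{p,q}\,\Psi_p(\omega^{2k})\,\Psi_q(\omega^{2m-2k-2})$, with $\Psi_q(\omega^0)=1$ and vanishing odd moments, and consequently $\Psi_q(\omega^{2m}) = \sum_{(\pi,f)\in\mathcal{NC}_{2m,q}^2[r]} b_q(\pi,f)$, where $b_q(\pi,f)=\prod_k b_q(\pi_k,f)$ and $b_q(\pi_k,f)=b_{i,j}$ whenever block $\pi_k$ is colored by $i$ and its nearest outer block by $j$. -/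
open ContinuousLinearMap

/-- The color of the nearest outer block of the block with left leg `l` under a coloring
`g` of the elements (constant on blocks); for a covering block this is the color `q` of
the imaginary block. -/
def outerColor {r m : ℕ} (q : Fin r) (f : Fin m → Fin m) (g : Fin m → Fin r)
    (l : Fin m) : Fin r :=
  let S := Finset.univ.filter (fun j => j < f j ∧ j < l ∧ f l < f j)
  if h : S.Nonempty then g (S.max' h) else q

/-- `b_q(π, f) = ∏_{blocks} b_{i,j}` where a block colored `i` whose nearest outer block
is colored `j` contributes `b_{i,j}` (the imaginary block being colored `q`). -/
def ncWeight {r m : ℕ} (b : Fin r → Fin r → ℝ) (q : Fin r) (f : Fin m → Fin m)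
    (g : Fin m → Fin r) : ℝ :=
  ∏ l ∈ leftLegs f, b (g l) (outerColor q f g l)


namespace Stmt11Aux


/-- Moves: `some i` = create color `i`, `none` = annihilate. -/
abbrev Mv (r : ℕ) := Option (Fin r)

/-- Run a list of moves on a stack of colors; `none` if we annihilate the vacuum. -/
def run {r : ℕ} : List (Fin r) → List (Mv r) → Option (List (Fin r))
  | s, [] => some s
  | s, some i :: ms => run (i :: s) ms
  | [], none :: _ => none
  | _ :: t, none :: ms => run t ms

/-- Weight (product of square roots of covariances) of a list of moves. -/
noncomputable def wgt {r : ℕ} (b : Fin r → Fin r → ℝ) (q : Fin r) :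
    List (Fin r) → List (Mv r) → ℝ
  | _, [] => 1
  | s, some i :: ms => Real.sqrt (b i (s.headD q)) * wgt b q (i :: s) ms
  | [], none :: _ => 0
  | a :: t, none :: ms => Real.sqrt (b a (t.headD q)) * wgt b q t ms

variable {r : ℕ}

@[simp] lemma run_nil (s : List (Fin r)) : run s [] = some s := by simp [run]
@[simp] lemma run_push (s : List (Fin r)) (i : Fin r) (ms : List (Mv r)) :
    run s (some i :: ms) = run (i :: s) ms := by cases s <;> simp [run]
@[simp] lemma run_pop_nil (ms : List (Mv r)) : run ([] : List (Fin r)) (none :: ms) = none := by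
  simp [run]
@[simp] lemma run_pop (a : Fin r) (t : List (Fin r)) (ms : List (Mv r)) :
    run (a :: t) (none :: ms) = run t ms := by simp [run]

variable {b : Fin r → Fin r → ℝ} {q : Fin r}

@[simp] lemma wgt_nil (s : List (Fin r)) : wgt b q s [] = 1 := by simp [wgt]
@[simp] lemma wgt_push (s : List (Fin r)) (i : Fin r) (ms : List (Mv r)) :
    wgt b q s (some i :: ms) = Real.sqrt (b i (s.headD q)) * wgt b q (i :: s) ms := by
  cases s <;> simp [wgt]
@[simp] lemma wgt_pop_nil (ms : List (Mv r)) : wgt b q ([] : List (Fin r)) (none :: ms) = 0 := by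
  simp [wgt]
@[simp] lemma wgt_pop (a : Fin r) (t : List (Fin r)) (ms : List (Mv r)) :
    wgt b q (a :: t) (none :: ms) = Real.sqrt (b a (t.headD q)) * wgt b q t ms := by
  simp [wgt]

lemma headD_append (s u : List (Fin r)) (q : Fin r) :
    (s ++ u).headD q = s.headD (u.headD q) := by cases s <;> simp

lemma run_append (s : List (Fin r)) (A B : List (Mv r)) :
    run s (A ++ B) = (run s A).elim none (fun s' => run s' B) := by
  induction A generalizing s with
  | nil => simp
  | cons mv A ih =>
    match mv, s with
    | some i, s => simpa using ih (i :: s)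
    | none, [] => simp
    | none, a :: t => simpa using ih t

lemma run_lift {s s' : List (Fin r)} (u : List (Fin r)) {A : List (Mv r)}
    (h : run s A = some s') : run (s ++ u) A = some (s' ++ u) := by
  induction A generalizing s with
  | nil => simp at h; simp [h]
  | cons mv A ih =>
    match mv, s with
    | some i, s =>
      rw [run_push] at h
      simpa using ih (s := i :: s) h
    | none, [] => simp at h
    | none, a :: t =>
      rw [run_pop] at h
      simpa using ih (s := t) h

lemma wgt_append {s s' : List (Fin r)}
    {A : List (Mv r)} (B : List (Mv r)) (h : run s A = some s') :
    wgt b q s (A ++ B) = wgt b q s A * wgt b q s' B := by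
  induction A generalizing s with
  | nil => simp at h; subst h; simp
  | cons mv A ih =>
    match mv, s with
    | some i, s =>
      rw [run_push] at h
      simp only [List.cons_append, wgt_push, ih (s := i :: s) h]; ring
    | none, [] => simp at h
    | none, a :: t =>
      rw [run_pop] at h
      simp only [List.cons_append, wgt_pop, ih (s := t) h]; ring

lemma wgt_base {s s' : List (Fin r)}
    (u : List (Fin r)) {A : List (Mv r)} (h : run s A = some s') :
    wgt b q (s ++ u) A = wgt b (u.headD q) s A := by
  induction A generalizing s with
  | nil => simp
  | cons mv A ih =>
    match mv, s with
    | some i, s =>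
      rw [run_push] at h
      have := ih (s := i :: s) h
      simp only [List.cons_append] at this
      simp only [wgt_push, this, headD_append]
    | none, [] => simp at h
    | none, a :: t =>
      rw [run_pop] at h
      have := ih (s := t) h
      simp only [List.cons_append, wgt_pop, this, headD_append]

lemma run_parity {s s' : List (Fin r)} {A : List (Mv r)} (h : run s A = some s') :
    (s.length + A.length) % 2 = s'.length % 2 := by
  induction A generalizing s with
  | nil => simp at h; subst h; simp
  | cons mv A ih =>
    match mv, s with
    | some i, s =>
      rw [run_push] at h
      have := ih (s := i :: s) h; simp at this ⊢; omega
    | none, [] => simp at h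
    | none, a :: t =>
      rw [run_pop] at h
      have := ih (s := t) h; simp at this ⊢; omega

/-- First-return splitting. -/
lemma run_split {p : Fin r} : ∀ {ms : List (Mv r)} (s : List (Fin r)),
    run (s ++ [p]) ms = some [] →
    ∃ A B, ms = A ++ none :: B ∧ run s A = some [] ∧ run [] B = some []
  | [], s => by intro h; simp at h
  | some i :: ms, s => by
    intro h
    rw [run_push] at h
    obtain ⟨A, B, h1, h2, h3⟩ := run_split (i :: s) h
    exact ⟨some i :: A, B, by simp [h1], by rw [run_push]; exact h2, h3⟩
  | none :: ms, [] => by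
    intro h
    rw [List.nil_append, run_pop] at h
    exact ⟨[], ms, rfl, rfl, h⟩
  | none :: ms, a :: t => by
    intro h
    rw [List.cons_append, run_pop] at h
    obtain ⟨A, B, h1, h2, h3⟩ := run_split t h
    exact ⟨none :: A, B, by simp [h1], by rw [run_pop]; exact h2, h3⟩

/-- Uniqueness of the first-return splitting. -/
lemma split_unique : ∀ {A : List (Mv r)} {A' B B' : List (Mv r)} {s : List (Fin r)},
    A ++ none :: B = A' ++ none :: B' → run s A = some [] → run s A' = some [] → A = A'
  | [], A', B, B', s => by
    intro he h h'
    match A' with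
    | [] => rfl
    | mv :: A₂ =>
      simp only [List.nil_append, List.cons_append, List.cons.injEq] at he
      obtain ⟨h1, h2⟩ := he
      subst h1
      obtain rfl : s = [] := by simpa using h
      simp at h'
  | mv :: A₂, A', B, B', s => by
    intro he h h'
    match A' with
    | [] =>
      simp only [List.nil_append, List.cons_append, List.cons.injEq] at he
      obtain ⟨h1, h2⟩ := he
      subst h1
      obtain rfl : s = [] := by simpa using h'
      simp at h
    | mv' :: A₂' =>
      simp only [List.cons_append, List.cons.injEq] at he
      obtain ⟨rfl, he⟩ := he
      match mv, s with
      | some i, s =>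
        rw [run_push] at h h'
        rw [split_unique (A := A₂) (A' := A₂') (s := i :: s) he h h']
      | none, [] => simp at h
      | none, a :: t =>
        rw [run_pop] at h h'
        rw [split_unique (A := A₂) (A' := A₂') (s := t) he h h']


/-- The `Finset` of lists of moves of length `n`. -/
def L (r : ℕ) : ℕ → Finset (List (Mv r))
  | 0 => {[]}
  | n + 1 => ((Finset.univ : Finset (Mv r)) ×ˢ L r n).image fun x => x.1 :: x.2

lemma mem_L {n : ℕ} {ms : List (Mv r)} : ms ∈ L r n ↔ ms.length = n := by
  induction n generalizing ms with
  | zero => simp [L]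
  | succ n ih =>
    simp only [L, Finset.mem_image, Finset.mem_product, Finset.mem_univ, true_and]
    constructor
    · rintro ⟨⟨mv, ms'⟩, h1, rfl⟩
      simp [ih.1 h1]
    · intro h
      match ms with
      | mv :: ms' => exact ⟨(mv, ms'), ih.2 (by simpa using h), rfl⟩

/-- The `n`-th moment as a sum over closed paths. -/
noncomputable def Mom (b : Fin r → Fin r → ℝ) (q : Fin r) (n : ℕ) : ℝ :=
  ∑ ms ∈ (L r n).filter (fun ms => run [] ms = some []), wgt b q [] ms

@[simp] lemma Mom_zero : Mom b q 0 = 1 := by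
  simp [Mom, L, Finset.filter_singleton]

lemma Mom_odd {n : ℕ} (h : Odd n) : Mom b q n = 0 := by
  rw [Mom, Finset.sum_eq_zero]
  intro ms hms
  simp only [Finset.mem_filter, mem_L] at hms
  have h2 := run_parity hms.2
  simp only [List.length_nil, Nat.zero_add, Nat.zero_mod] at h2
  rw [hms.1] at h2
  obtain ⟨t, rfl⟩ := h
  omega

lemma Mom_rec (hb : ∀ i j, 0 ≤ b i j) {m : ℕ} (hm : 1 ≤ m) :
    Mom b q (2 * m) = ∑ p, ∑ k ∈ Finset.range m,
      b p q * Mom b p (2 * k) * Mom b q (2 * m - 2 * k - 2) := by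
  have hrw : ∀ p : Fin r, ∀ k ∈ Finset.range m,
      b p q * Mom b p (2 * k) * Mom b q (2 * m - 2 * k - 2) =
      ∑ A ∈ (L r (2 * k)).filter (fun ms => run [] ms = some []),
        ∑ B ∈ (L r (2 * m - 2 * k - 2)).filter (fun ms => run [] ms = some []),
          b p q * wgt b p [] A * wgt b q [] B := by
    intro p k _
    rw [Mom, Mom, mul_assoc, Finset.sum_mul_sum, Finset.mul_sum]
    exact Finset.sum_congr rfl fun A _ => by
      rw [Finset.mul_sum]; exact Finset.sum_congr rfl fun B _ => by ring
  rw [Finset.sum_congr rfl fun p _ => Finset.sum_congr rfl (hrw p)]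
  have flat : (∑ p, ∑ k ∈ Finset.range m,
      ∑ A ∈ (L r (2 * k)).filter (fun ms => run [] ms = some []),
        ∑ B ∈ (L r (2 * m - 2 * k - 2)).filter (fun ms => run [] ms = some []),
          b p q * wgt b p [] A * wgt b q [] B)
      = ∑ x ∈ ((Finset.univ : Finset (Fin r)) ×ˢ Finset.range m).sigma
          (fun pk => ((L r (2 * pk.2)).filter (fun ms => run [] ms = some [])) ×ˢ
            ((L r (2 * m - 2 * pk.2 - 2)).filter (fun ms => run [] ms = some []))),
          b x.1.1 q * wgt b x.1.1 [] x.2.1 * wgt b q [] x.2.2 := by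
    rw [Finset.sum_sigma]
    rw [← Finset.sum_product']
    exact Finset.sum_congr rfl fun pk _ => by rw [← Finset.sum_product']
  rw [flat, Mom]
  symm
  refine Finset.sum_bij (fun x _ => some x.1.1 :: x.2.1 ++ none :: x.2.2) ?_ ?_ ?_ ?_
  · rintro ⟨⟨p, k⟩, A, B⟩ hx
    simp only [Finset.mem_sigma, Finset.mem_product, Finset.mem_univ, true_and,
      Finset.mem_range, Finset.mem_filter, mem_L] at hx
    obtain ⟨hk, ⟨hA, hcA⟩, hB, hcB⟩ := hx
    simp only [Finset.mem_filter, mem_L, List.length_cons, List.length_append,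
      List.length_cons, hA, hB]
    refine ⟨by omega, ?_⟩
    have h1 : run [(p : Fin r)] A = some [p] := run_lift (s := []) [p] hcA
    have h1' : run ([] : List (Fin r)) (some p :: A) = some [p] := by
      rw [run_push]; exact h1
    rw [run_append, h1']
    simpa using hcB
  · rintro ⟨⟨p, k⟩, A, B⟩ hx ⟨⟨p', k'⟩, A', B'⟩ hx' heq
    simp only [Finset.mem_sigma, Finset.mem_product, Finset.mem_univ, true_and,
      Finset.mem_range, Finset.mem_filter, mem_L] at hx hx'
    obtain ⟨hk, ⟨hA, hcA⟩, hB, hcB⟩ := hx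
    obtain ⟨hk', ⟨hA', hcA'⟩, hB', hcB'⟩ := hx'
    have heq2 : p = p' ∧ (A ++ none :: B) = (A' ++ none :: B') := by
      have h := heq
      simp only [List.cons_append, List.cons.injEq, Option.some.injEq] at h
      exact h
    obtain ⟨rfl, heq3⟩ := heq2
    have hAA : A = A' := split_unique heq3 hcA hcA'
    subst hAA
    have hBB : B = B' := by simpa using List.append_cancel_left heq3
    subst hBB
    have : k = k' := by omega
    subst this
    rfl
  · intro ms hms
    simp only [Finset.mem_filter, mem_L] at hms
    obtain ⟨hlen, hcl⟩ := hms
    match ms with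
    | [] => simp at hlen; omega
    | none :: rest => simp at hcl
    | some p :: rest =>
      rw [run_push] at hcl
      obtain ⟨A, B, rfl, hA, hB⟩ := run_split (s := []) (by simpa using hcl)
      have hpar := run_parity hA
      simp only [List.length_nil, Nat.zero_add, Nat.zero_mod] at hpar
      have hlen' : A.length + B.length + 2 = 2 * m := by
        simp [List.length_append] at hlen; omega
      refine ⟨⟨(p, A.length / 2), A, B⟩, ?_, rfl⟩
      simp only [Finset.mem_sigma, Finset.mem_product, Finset.mem_univ, true_and,
        Finset.mem_range, Finset.mem_filter, mem_L]
      refine ⟨by omega, ⟨by omega, hA⟩, by omega, hB⟩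
  · rintro ⟨⟨p, k⟩, A, B⟩ hx
    simp only [Finset.mem_sigma, Finset.mem_product, Finset.mem_univ, true_and,
      Finset.mem_range, Finset.mem_filter, mem_L] at hx
    obtain ⟨hk, ⟨hA, hcA⟩, hB, hcB⟩ := hx
    have h1 : run [(p : Fin r)] A = some [p] := run_lift (s := []) [p] hcA
    show b p q * wgt b p [] A * wgt b q [] B = wgt b q [] (some p :: (A ++ none :: B))
    rw [wgt_push, wgt_append (B := none :: B) h1, wgt_pop]
    have h2 : wgt b q [p] A = wgt b p [] A := by
      have := wgt_base (b := b) (q := q) (s := []) [p] hcA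
      simpa using this
    simp only [List.headD_nil, h2]
    rw [← mul_assoc, ← mul_assoc]
    rw [mul_comm (Real.sqrt (b p q)) (wgt b p [] A), mul_assoc (wgt b p [] A),
      Real.mul_self_sqrt (hb p q)]
    ring

/-! ### The pairing side -/

section Pairings

variable {r : ℕ} {b : Fin r → Fin r → ℝ} {q : Fin r}

variable (b) in
/-- The sum of colored noncrossing-pairing weights. -/
noncomputable def PS (q : Fin r) (m : ℕ) : ℝ :=
  ∑ x ∈ (Finset.univ : Finset ({f : Fin (2*m) → Fin (2*m) // IsNCPairing f} ×
      (Fin (2*m) → Fin r))).filter (fun x => ∀ i, x.2 (x.1.1 i) = x.2 i),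
    ncWeight b q x.1.1 x.2

lemma PS_eq_sum (q : Fin r) (m : ℕ) :
    PS b q m = ∑ π : {f : Fin (2*m) → Fin (2*m) // IsNCPairing f},
      ∑ g : Fin (2*m) → Fin r,
        if ∀ i, g (π.1 i) = g i then ncWeight b q π.1 g else 0 := by
  rw [PS, Finset.sum_filter, ← Finset.sum_product']
  rfl

lemma PS_zero (q : Fin r) : PS b q 0 = 1 := by
  have hemp : ∀ i : Fin (2*0), False := fun i => (Nat.not_lt_zero i.1 (by simpa using i.2))
  have hsub : ∀ y z : ({f : Fin (2*0) → Fin (2*0) // IsNCPairing f} × (Fin (2*0) → Fin r)),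
      y = z := by
    intro y z
    refine Prod.ext (Subtype.ext (funext fun i => (hemp i).elim)) (funext fun i => (hemp i).elim)
  have hx : IsNCPairing (fun i : Fin (2*0) => i) :=
    ⟨fun i => rfl, fun i => (hemp i).elim, fun i j _ _ _ => hemp i⟩
  have huniv : (Finset.univ : Finset ({f : Fin (2*0) → Fin (2*0) // IsNCPairing f} ×
      (Fin (2*0) → Fin r))) = {(⟨_, hx⟩, fun _ => q)} := by
    ext y
    simp [hsub y (⟨_, hx⟩, fun _ => q)]
  rw [PS, Finset.filter_true_of_mem (fun x _ i => (hemp i).elim), huniv,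
    Finset.sum_singleton, ncWeight]
  have : leftLegs (fun i : Fin (2*0) => i) = ∅ := by
    ext i; exact absurd trivial (fun _ => hemp i)
  rw [this, Finset.prod_empty]

/-! #### Gluing -/

def emb1 {m k : ℕ} (hk : k < m) (j : Fin (2*k)) : Fin (2*m) :=
  ⟨j.val + 1, by have := j.isLt; omega⟩

def emb2 {m k : ℕ} (hk : k < m) (j : Fin (2*(m-k-1))) : Fin (2*m) :=
  ⟨j.val + (2*k+2), by have := j.isLt; omega⟩

@[simp] lemma emb1_val {m k : ℕ} (hk : k < m) (j : Fin (2*k)) :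
    (emb1 hk j).val = j.val + 1 := rfl
@[simp] lemma emb2_val {m k : ℕ} (hk : k < m) (j : Fin (2*(m-k-1))) :
    (emb2 hk j).val = j.val + (2*k+2) := rfl

lemma emb1_inj {m k : ℕ} (hk : k < m) : Function.Injective (emb1 hk) := by
  intro a b h
  have : a.val + 1 = b.val + 1 := congrArg Fin.val h
  exact Fin.ext (by omega)

lemma emb2_inj {m k : ℕ} (hk : k < m) : Function.Injective (emb2 hk) := by
  intro a b h
  have : a.val + (2*k+2) = b.val + (2*k+2) := congrArg Fin.val h
  exact Fin.ext (by omega)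

lemma emb1_mono {m k : ℕ} (hk : k < m) : Monotone (emb1 hk) := by
  intro a b h
  simp only [Fin.le_def, emb1_val]
  omega

lemma emb2_mono {m k : ℕ} (hk : k < m) : Monotone (emb2 hk) := by
  intro a b h
  simp only [Fin.le_def, emb2_val]
  omega

def gl {m k : ℕ} (hk : k < m) (f₁ : Fin (2*k) → Fin (2*k))
    (f₂ : Fin (2*(m-k-1)) → Fin (2*(m-k-1))) : Fin (2*m) → Fin (2*m) := fun i =>
  if h0 : i.val = 0 then ⟨2*k+1, by omega⟩
  else if hp : i.val = 2*k+1 then ⟨0, by omega⟩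
  else if h1 : i.val < 2*k+1 then emb1 hk (f₁ ⟨i.val - 1, by omega⟩)
  else emb2 hk (f₂ ⟨i.val - (2*k+2), by have := i.isLt; omega⟩)

def gc {m k : ℕ} (hk : k < m) (p : Fin r) (g₁ : Fin (2*k) → Fin r)
    (g₂ : Fin (2*(m-k-1)) → Fin r) : Fin (2*m) → Fin r := fun i =>
  if h0 : i.val = 0 then p
  else if hp : i.val = 2*k+1 then p
  else if h1 : i.val < 2*k+1 then g₁ ⟨i.val - 1, by omega⟩
  else g₂ ⟨i.val - (2*k+2), by have := i.isLt; omega⟩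

section GlueLemmas

variable {m k : ℕ} (hk : k < m) (f₁ : Fin (2*k) → Fin (2*k))
  (f₂ : Fin (2*(m-k-1)) → Fin (2*(m-k-1))) (p : Fin r)
  (g₁ : Fin (2*k) → Fin r) (g₂ : Fin (2*(m-k-1)) → Fin r)

lemma gl_zero : gl hk f₁ f₂ ⟨0, by omega⟩ = ⟨2*k+1, by omega⟩ := by
  simp [gl]

lemma gl_pivot : gl hk f₁ f₂ ⟨2*k+1, by omega⟩ = ⟨0, by omega⟩ := by
  simp [gl]

lemma gl_emb1 (j : Fin (2*k)) : gl hk f₁ f₂ (emb1 hk j) = emb1 hk (f₁ j) := by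
  have hj := j.isLt
  rw [gl, dif_neg (by simp only [emb1_val]; omega), dif_neg (by simp only [emb1_val]; omega),
    dif_pos (by simp only [emb1_val]; omega)]
  exact congrArg (fun x => emb1 hk (f₁ x)) (Fin.ext (by simp only [emb1_val]; omega))

lemma gl_emb2 (j : Fin (2*(m-k-1))) : gl hk f₁ f₂ (emb2 hk j) = emb2 hk (f₂ j) := by
  have hj := j.isLt
  rw [gl, dif_neg (by simp only [emb2_val]; omega), dif_neg (by simp only [emb2_val]; omega),
    dif_neg (by simp only [emb2_val]; omega)]
  exact congrArg (fun x => emb2 hk (f₂ x)) (Fin.ext (by simp only [emb2_val]; omega))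

lemma gc_zero : gc hk p g₁ g₂ ⟨0, by omega⟩ = p := by simp [gc]

lemma gc_pivot : gc hk p g₁ g₂ ⟨2*k+1, by omega⟩ = p := by simp [gc]

lemma gc_emb1 (j : Fin (2*k)) : gc hk p g₁ g₂ (emb1 hk j) = g₁ j := by
  have hj := j.isLt
  rw [gc, dif_neg (by simp only [emb1_val]; omega), dif_neg (by simp only [emb1_val]; omega),
    dif_pos (by simp only [emb1_val]; omega)]
  exact congrArg (fun x => g₁ x) (Fin.ext (by simp only [emb1_val]; omega))

lemma gc_emb2 (j : Fin (2*(m-k-1))) : gc hk p g₁ g₂ (emb2 hk j) = g₂ j := by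
  have hj := j.isLt
  rw [gc, dif_neg (by simp only [emb2_val]; omega), dif_neg (by simp only [emb2_val]; omega),
    dif_neg (by simp only [emb2_val]; omega)]
  exact congrArg (fun x => g₂ x) (Fin.ext (by simp only [emb2_val]; omega))

lemma cases_glue (i : Fin (2*m)) :
    i = ⟨0, by omega⟩ ∨ i = ⟨2*k+1, by omega⟩ ∨ (∃ j : Fin (2*k), i = emb1 hk j) ∨
      (∃ j : Fin (2*(m-k-1)), i = emb2 hk j) := by
  have hi := i.isLt
  rcases Nat.lt_or_ge i.val (2*k+1) with h | h
  · rcases Nat.eq_zero_or_pos i.val with h0 | h0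
    · exact Or.inl (Fin.ext h0)
    · exact Or.inr (Or.inr (Or.inl ⟨⟨i.val - 1, by omega⟩,
        Fin.ext (by simp only [emb1_val]; omega)⟩))
  · rcases Nat.eq_or_lt_of_le h with h0 | h0
    · exact Or.inr (Or.inl (Fin.ext h0.symm))
    · exact Or.inr (Or.inr (Or.inr ⟨⟨i.val - (2*k+2), by omega⟩,
        Fin.ext (by simp only [emb2_val]; omega)⟩))

lemma glue_nc (h₁ : IsNCPairing f₁) (h₂ : IsNCPairing f₂) :
    IsNCPairing (gl hk f₁ f₂) := by
  obtain ⟨h₁i, h₁n, h₁c⟩ := h₁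
  obtain ⟨h₂i, h₂n, h₂c⟩ := h₂
  refine ⟨?_, ?_, ?_⟩
  · intro i
    rcases cases_glue hk i with rfl | rfl | ⟨j, rfl⟩ | ⟨j, rfl⟩
    · rw [gl_zero, gl_pivot]
    · rw [gl_pivot, gl_zero]
    · rw [gl_emb1, gl_emb1, h₁i]
    · rw [gl_emb2, gl_emb2, h₂i]
  · intro i
    rcases cases_glue hk i with rfl | rfl | ⟨j, rfl⟩ | ⟨j, rfl⟩
    · rw [gl_zero]; intro h
      have := congrArg Fin.val h
      simp only [Fin.val_mk] at this
      omega
    · rw [gl_pivot]; intro h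
      have := congrArg Fin.val h
      simp only [Fin.val_mk] at this
      omega
    · rw [gl_emb1]; intro h
      exact h₁n j (emb1_inj hk h)
    · rw [gl_emb2]; intro h
      exact h₂n j (emb2_inj hk h)
  · intro i j hij hj hfi
    rcases cases_glue hk i with rfl | rfl | ⟨a, rfl⟩ | ⟨a, rfl⟩ <;>
      rcases cases_glue hk j with rfl | rfl | ⟨c, rfl⟩ | ⟨c, rfl⟩
    all_goals simp only [gl_zero, gl_pivot, gl_emb1, gl_emb2] at hj hfi
    all_goals rw [Fin.lt_def] at hij hj hfi
    all_goals simp only [Fin.val_mk, emb1_val, emb2_val] at hij hj hfi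
    all_goals try (have hal := a.isLt)
    all_goals try (have hcl := c.isLt)
    all_goals try (have hfal1 := (f₁ a).isLt)
    all_goals try (have hfcl1 := (f₁ c).isLt)
    all_goals try (have hfal2 := (f₂ a).isLt)
    all_goals try (have hfcl2 := (f₂ c).isLt)
    all_goals try omega
    · exact h₁c a c (Fin.lt_def.mpr (by omega)) (Fin.lt_def.mpr (by omega))
        (Fin.lt_def.mpr (by omega))
    · exact h₂c a c (Fin.lt_def.mpr (by omega)) (Fin.lt_def.mpr (by omega))
        (Fin.lt_def.mpr (by omega))

lemma glue_const (hg₁ : ∀ i, g₁ (f₁ i) = g₁ i) (hg₂ : ∀ i, g₂ (f₂ i) = g₂ i) :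
    ∀ i, gc hk p g₁ g₂ (gl hk f₁ f₂ i) = gc hk p g₁ g₂ i := by
  intro i
  rcases cases_glue hk i with rfl | rfl | ⟨j, rfl⟩ | ⟨j, rfl⟩
  · rw [gl_zero, gc_pivot, gc_zero]
  · rw [gl_pivot, gc_zero, gc_pivot]
  · rw [gl_emb1, gc_emb1, gc_emb1, hg₁]
  · rw [gl_emb2, gc_emb2, gc_emb2, hg₂]

lemma mem_leftLegs {n : ℕ} {f : Fin n → Fin n} {i : Fin n} :
    i ∈ leftLegs f ↔ i < f i := by simp [leftLegs]

lemma leftLegs_glue :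
    leftLegs (gl hk f₁ f₂) = insert ⟨0, by omega⟩
      (((leftLegs f₁).image (emb1 hk)) ∪ ((leftLegs f₂).image (emb2 hk))) := by
  ext i
  rw [mem_leftLegs, Finset.mem_insert, Finset.mem_union, Finset.mem_image, Finset.mem_image]
  rcases cases_glue hk i with rfl | rfl | ⟨j, rfl⟩ | ⟨j, rfl⟩
  · rw [gl_zero]
    constructor
    · intro _; exact Or.inl rfl
    · intro _; exact Fin.lt_def.mpr (by simp only [Fin.val_mk]; omega)
  · rw [gl_pivot]
    constructor
    · intro h
      have := Fin.lt_def.mp h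
      simp only [Fin.val_mk] at this
      omega
    · rintro (h | ⟨a, _, h⟩ | ⟨a, _, h⟩)
      · have := congrArg Fin.val h
        simp only [Fin.val_mk] at this
        omega
      · have := congrArg Fin.val h
        have hal := a.isLt
        simp only [Fin.val_mk, emb1_val] at this
        exact absurd this (by omega)
      · have := congrArg Fin.val h
        have hal := a.isLt
        simp only [Fin.val_mk, emb2_val] at this
        exact absurd this (by omega)
  · rw [gl_emb1]
    constructor
    · intro h
      refine Or.inr (Or.inl ⟨j, mem_leftLegs.mpr ?_, rfl⟩)
      have := Fin.lt_def.mp h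
      simp only [emb1_val] at this
      exact Fin.lt_def.mpr (by omega)
    · rintro (h | ⟨a, ha, h⟩ | ⟨a, ha, h⟩)
      · have := congrArg Fin.val h
        simp only [Fin.val_mk, emb1_val] at this
        exact absurd this (by omega)
      · obtain rfl : a = j := emb1_inj hk h
        have := Fin.lt_def.mp (mem_leftLegs.mp ha)
        exact Fin.lt_def.mpr (by simp only [emb1_val]; omega)
      · have := congrArg Fin.val h
        have hal := a.isLt
        have hjl := j.isLt
        simp only [emb1_val, emb2_val] at this
        exact absurd this (by omega)
  · rw [gl_emb2]
    constructor
    · intro h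
      refine Or.inr (Or.inr ⟨j, mem_leftLegs.mpr ?_, rfl⟩)
      have := Fin.lt_def.mp h
      simp only [emb2_val] at this
      exact Fin.lt_def.mpr (by omega)
    · rintro (h | ⟨a, ha, h⟩ | ⟨a, ha, h⟩)
      · have := congrArg Fin.val h
        simp only [Fin.val_mk, emb2_val] at this
        exact absurd this (by omega)
      · have := congrArg Fin.val h
        have hal := a.isLt
        have hjl := j.isLt
        simp only [emb1_val, emb2_val] at this
        exact absurd this (by omega)
      · obtain rfl : a = j := emb2_inj hk h
        have := Fin.lt_def.mp (mem_leftLegs.mp ha)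
        exact Fin.lt_def.mpr (by simp only [emb2_val]; omega)

def oset {n : ℕ} (f : Fin n → Fin n) (l : Fin n) : Finset (Fin n) :=
  Finset.univ.filter (fun j => j < f j ∧ j < l ∧ f l < f j)

lemma outerColor_eq {n : ℕ} (f : Fin n → Fin n) (g : Fin n → Fin r) (l : Fin n) :
    outerColor q f g l = if h : (oset f l).Nonempty then g ((oset f l).max' h) else q := rfl

lemma mem_oset {n : ℕ} {f : Fin n → Fin n} {l j : Fin n} :
    j ∈ oset f l ↔ j < f j ∧ j < l ∧ f l < f j := by simp [oset]

lemma oset_emb1 (l : Fin (2*k)) :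
    oset (gl hk f₁ f₂) (emb1 hk l) = insert ⟨0, by omega⟩ ((oset f₁ l).image (emb1 hk)) := by
  ext i
  rw [mem_oset, Finset.mem_insert, Finset.mem_image]
  rcases cases_glue hk i with rfl | rfl | ⟨j, rfl⟩ | ⟨j, rfl⟩
  · rw [gl_zero, gl_emb1]
    constructor
    · intro _; exact Or.inl rfl
    · intro _
      have h1 := (f₁ l).isLt
      have h2 := l.isLt
      refine ⟨Fin.lt_def.mpr ?_, Fin.lt_def.mpr ?_, Fin.lt_def.mpr ?_⟩ <;>
        simp only [Fin.val_mk, emb1_val] <;> omega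
  · rw [gl_pivot, gl_emb1]
    constructor
    · rintro ⟨h, -, -⟩
      have := Fin.lt_def.mp h
      simp only [Fin.val_mk] at this
      exact absurd this (by omega)
    · rintro (h | ⟨a, -, h⟩)
      · have := congrArg Fin.val h
        simp only [Fin.val_mk] at this
        exact absurd this (by omega)
      · have := congrArg Fin.val h
        have ha := a.isLt
        simp only [Fin.val_mk, emb1_val] at this
        exact absurd this (by omega)
  · rw [gl_emb1, gl_emb1]
    constructor
    · rintro ⟨h1, h2, h3⟩
      refine Or.inr ⟨j, mem_oset.mpr ⟨?_, ?_, ?_⟩, rfl⟩ <;>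
        rw [Fin.lt_def] at h1 h2 h3 ⊢ <;> simp only [emb1_val] at h1 h2 h3 <;> omega
    · rintro (h | ⟨a, ha, h⟩)
      · have := congrArg Fin.val h
        simp only [Fin.val_mk, emb1_val] at this
        exact absurd this (by omega)
      · obtain rfl : a = j := emb1_inj hk h
        obtain ⟨h1, h2, h3⟩ := mem_oset.mp ha
        refine ⟨?_, ?_, ?_⟩ <;> rw [Fin.lt_def] at h1 h2 h3 ⊢ <;>
          simp only [emb1_val] <;> omega
  · rw [gl_emb2, gl_emb1]
    constructor
    · rintro ⟨-, h2, -⟩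
      have := Fin.lt_def.mp h2
      have hl := l.isLt
      simp only [emb1_val, emb2_val] at this
      exact absurd this (by omega)
    · rintro (h | ⟨a, -, h⟩)
      · have := congrArg Fin.val h
        simp only [Fin.val_mk, emb2_val] at this
        exact absurd this (by omega)
      · have := congrArg Fin.val h
        have ha := a.isLt
        have hj := j.isLt
        simp only [emb1_val, emb2_val] at this
        exact absurd this (by omega)

lemma oset_emb2 (l : Fin (2*(m-k-1))) :
    oset (gl hk f₁ f₂) (emb2 hk l) = (oset f₂ l).image (emb2 hk) := by
  ext i
  rw [mem_oset, Finset.mem_image]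
  rcases cases_glue hk i with rfl | rfl | ⟨j, rfl⟩ | ⟨j, rfl⟩
  · rw [gl_zero, gl_emb2]
    constructor
    · rintro ⟨-, -, h3⟩
      have := Fin.lt_def.mp h3
      simp only [Fin.val_mk, emb2_val] at this
      exact absurd this (by omega)
    · rintro ⟨a, -, h⟩
      have := congrArg Fin.val h
      simp only [Fin.val_mk, emb2_val] at this
      exact absurd this (by omega)
  · rw [gl_pivot, gl_emb2]
    constructor
    · rintro ⟨h, -, -⟩
      have := Fin.lt_def.mp h
      simp only [Fin.val_mk] at this
      exact absurd this (by omega)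
    · rintro ⟨a, -, h⟩
      have := congrArg Fin.val h
      have ha := a.isLt
      simp only [Fin.val_mk, emb2_val] at this
      exact absurd this (by omega)
  · rw [gl_emb1, gl_emb2]
    constructor
    · rintro ⟨-, -, h3⟩
      have hv := Fin.lt_def.mp h3
      have hf := (f₁ j).isLt
      simp only [emb1_val, emb2_val] at hv
      exact absurd hv (by omega)
    · rintro ⟨a, -, h⟩
      have := congrArg Fin.val h
      have ha := a.isLt
      have hj := j.isLt
      simp only [emb1_val, emb2_val] at this
      exact absurd this (by omega)
  · rw [gl_emb2, gl_emb2]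
    constructor
    · rintro ⟨h1, h2, h3⟩
      refine ⟨j, mem_oset.mpr ⟨?_, ?_, ?_⟩, rfl⟩ <;>
        rw [Fin.lt_def] at h1 h2 h3 ⊢ <;> simp only [emb2_val] at h1 h2 h3 <;> omega
    · rintro ⟨a, ha, h⟩
      obtain rfl : a = j := emb2_inj hk h
      obtain ⟨h1, h2, h3⟩ := mem_oset.mp ha
      refine ⟨?_, ?_, ?_⟩ <;> rw [Fin.lt_def] at h1 h2 h3 ⊢ <;>
        simp only [emb2_val] <;> omega

lemma outer_zero : outerColor q (gl hk f₁ f₂) (gc hk p g₁ g₂) ⟨0, by omega⟩ = q := by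
  rw [outerColor_eq]
  refine dif_neg ?_
  rintro ⟨j, hj⟩
  obtain ⟨-, h2, -⟩ := mem_oset.mp hj
  have := Fin.lt_def.mp h2
  simp only [Fin.val_mk] at this
  omega

lemma outer_emb1 (l : Fin (2*k)) :
    outerColor q (gl hk f₁ f₂) (gc hk p g₁ g₂) (emb1 hk l) = outerColor p f₁ g₁ l := by
  rw [outerColor_eq, outerColor_eq, oset_emb1 hk f₁ f₂ l]
  by_cases h : (oset f₁ l).Nonempty
  · rw [dif_pos (Finset.insert_nonempty _ _), dif_pos h]
    have hmax : (insert (⟨0, by omega⟩ : Fin (2*m)) ((oset f₁ l).image (emb1 hk))).max'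
        (Finset.insert_nonempty _ _) = emb1 hk ((oset f₁ l).max' h) := by
      apply le_antisymm
      · apply Finset.max'_le
        intro y hy
        rcases Finset.mem_insert.mp hy with rfl | hy
        · exact Fin.le_def.mpr (Nat.zero_le _)
        · obtain ⟨a, ha, rfl⟩ := Finset.mem_image.mp hy
          exact emb1_mono hk (Finset.le_max' _ a ha)
      · exact Finset.le_max' _ _ (Finset.mem_insert.mpr (Or.inr
          (Finset.mem_image.mpr ⟨_, Finset.max'_mem _ h, rfl⟩)))
    rw [hmax, gc_emb1]
  · rw [dif_pos (Finset.insert_nonempty _ _), dif_neg h]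
    have himg : (oset f₁ l).image (emb1 hk) = ∅ := by
      rw [Finset.not_nonempty_iff_eq_empty] at h
      rw [h, Finset.image_empty]
    have hmax : (insert (⟨0, by omega⟩ : Fin (2*m)) ((oset f₁ l).image (emb1 hk))).max'
        (Finset.insert_nonempty _ _) = ⟨0, by omega⟩ := by
      apply le_antisymm
      · apply Finset.max'_le
        intro y hy
        rcases Finset.mem_insert.mp hy with rfl | hy
        · exact le_refl _
        · rw [himg] at hy
          exact absurd hy (Finset.notMem_empty _)
      · exact Finset.le_max' _ _ (Finset.mem_insert_self _ _)
    rw [hmax, gc_zero]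

lemma outer_emb2 (l : Fin (2*(m-k-1))) :
    outerColor q (gl hk f₁ f₂) (gc hk p g₁ g₂) (emb2 hk l) = outerColor q f₂ g₂ l := by
  rw [outerColor_eq, outerColor_eq, oset_emb2 hk f₁ f₂ l]
  by_cases h : (oset f₂ l).Nonempty
  · have himg : ((oset f₂ l).image (emb2 hk)).Nonempty := h.image _
    rw [dif_pos himg, dif_pos h]
    have hmax : ((oset f₂ l).image (emb2 hk)).max' himg = emb2 hk ((oset f₂ l).max' h) := by
      apply le_antisymm
      · apply Finset.max'_le
        intro y hy
        obtain ⟨a, ha, rfl⟩ := Finset.mem_image.mp hy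
        exact emb2_mono hk (Finset.le_max' _ a ha)
      · exact Finset.le_max' _ _ (Finset.mem_image.mpr ⟨_, Finset.max'_mem _ h, rfl⟩)
    rw [hmax, gc_emb2]
  · have himg : ¬ ((oset f₂ l).image (emb2 hk)).Nonempty := by
      rw [Finset.not_nonempty_iff_eq_empty] at h ⊢
      rw [h, Finset.image_empty]
    rw [dif_neg himg, dif_neg h]

lemma ncWeight_glue :
    ncWeight b q (gl hk f₁ f₂) (gc hk p g₁ g₂) =
      b p q * ncWeight b p f₁ g₁ * ncWeight b q f₂ g₂ := by
  rw [ncWeight, leftLegs_glue hk f₁ f₂]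
  have hnot : (⟨0, by omega⟩ : Fin (2*m)) ∉
      ((leftLegs f₁).image (emb1 hk)) ∪ ((leftLegs f₂).image (emb2 hk)) := by
    rw [Finset.mem_union, Finset.mem_image, Finset.mem_image]
    rintro (⟨a, -, h⟩ | ⟨a, -, h⟩)
    · have hv := congrArg Fin.val h
      simp only [Fin.val_mk, emb1_val] at hv
      omega
    · have hv := congrArg Fin.val h
      simp only [Fin.val_mk, emb2_val] at hv
      omega
  have hdisj : Disjoint ((leftLegs f₁).image (emb1 hk)) ((leftLegs f₂).image (emb2 hk)) := by
    rw [Finset.disjoint_left]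
    intro x hx hx'
    rw [Finset.mem_image] at hx hx'
    obtain ⟨a, _, rfl⟩ := hx
    obtain ⟨c, _, hc⟩ := hx'
    have hv := congrArg Fin.val hc
    have hal := a.isLt
    simp only [emb1_val, emb2_val] at hv
    omega
  rw [Finset.prod_insert hnot, Finset.prod_union hdisj,
    Finset.prod_image (fun x _ y _ h => emb1_inj hk h),
    Finset.prod_image (fun x _ y _ h => emb2_inj hk h),
    gc_zero, outer_zero, mul_assoc]
  congr 1
  congr 1
  · refine Finset.prod_congr rfl fun l _ => ?_
    rw [gc_emb1, outer_emb1 hk f₁ f₂ p g₁ g₂ l]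
  · refine Finset.prod_congr rfl fun l _ => ?_
    rw [gc_emb2, outer_emb2 hk f₁ f₂ p g₁ g₂ l]

end GlueLemmas


lemma even_card_invol {α : Type*} [LinearOrder α] [DecidableEq α] (s : Finset α) (f : α → α)
    (hmem : ∀ a ∈ s, f a ∈ s) (hinv : ∀ a ∈ s, f (f a) = a) (hne : ∀ a ∈ s, f a ≠ a) :
    Even s.card := by
  classical
  have hsplit : s = s.filter (fun a => a < f a) ∪ s.filter (fun a => f a < a) := by
    ext a
    simp only [Finset.mem_union, Finset.mem_filter]
    constructor
    · intro ha
      rcases lt_or_gt_of_ne (Ne.symm (hne a ha)) with h | h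
      · exact Or.inl ⟨ha, h⟩
      · exact Or.inr ⟨ha, h⟩
    · rintro (⟨h, -⟩ | ⟨h, -⟩) <;> exact h
  have hdisj : Disjoint (s.filter (fun a => a < f a)) (s.filter (fun a => f a < a)) := by
    rw [Finset.disjoint_left]
    intro x hx hx'
    rw [Finset.mem_filter] at hx hx'
    exact absurd hx'.2 (not_lt_of_gt hx.2)
  have hcard : (s.filter (fun a => a < f a)).card = (s.filter (fun a => f a < a)).card := by
    apply Finset.card_bij' (fun a _ => f a) (fun a _ => f a)
    · intro a ha
      rw [Finset.mem_filter] at ha ⊢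
      exact ⟨hmem a ha.1, by rw [hinv a ha.1]; exact ha.2⟩
    · intro a ha
      rw [Finset.mem_filter] at ha ⊢
      exact ⟨hmem a ha.1, by rw [hinv a ha.1]; exact ha.2⟩
    · intro a ha
      rw [Finset.mem_filter] at ha
      exact hinv a ha.1
    · intro a ha
      rw [Finset.mem_filter] at ha
      exact hinv a ha.1
  have := Finset.card_union_of_disjoint hdisj
  rw [← hsplit] at this
  exact ⟨(s.filter (fun a => a < f a)).card, by omega⟩

lemma unglue {m : ℕ} (hm : 1 ≤ m) (F : Fin (2*m) → Fin (2*m)) (G : Fin (2*m) → Fin r)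
    (hF : IsNCPairing F) (hG : ∀ i, G (F i) = G i) :
    ∃ (k : ℕ) (hk : k < m) (f₁ : Fin (2*k) → Fin (2*k))
      (f₂ : Fin (2*(m-k-1)) → Fin (2*(m-k-1))) (p : Fin r) (g₁ : Fin (2*k) → Fin r)
      (g₂ : Fin (2*(m-k-1)) → Fin r),
      IsNCPairing f₁ ∧ IsNCPairing f₂ ∧ (∀ i, g₁ (f₁ i) = g₁ i) ∧ (∀ i, g₂ (f₂ i) = g₂ i) ∧
      gl hk f₁ f₂ = F ∧ gc hk p g₁ g₂ = G := by
  obtain ⟨hFi, hFn, hFc⟩ := hF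
  have hinj : Function.Injective F := fun a c h => by rw [← hFi a, h, hFi]
  have hz : (0:ℕ) < 2*m := by omega
  have ht0 : 0 < (F ⟨0, hz⟩).val := by
    rcases Nat.eq_zero_or_pos (F ⟨0, hz⟩).val with h | h
    · exact absurd (Fin.ext h) (hFn ⟨0, hz⟩)
    · exact h
  have htlt : (F ⟨0, hz⟩).val < 2*m := (F ⟨0, hz⟩).isLt
  have hINT : ∀ j : Fin (2*m), 0 < j.val → j.val < (F ⟨0, hz⟩).val →
      0 < (F j).val ∧ (F j).val < (F ⟨0, hz⟩).val := by
    intro j h1 h2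
    have hj0 : (F j).val ≠ 0 := by
      intro h
      have : F j = ⟨0, hz⟩ := Fin.ext h
      have := congrArg F this
      rw [hFi] at this
      rw [this] at h2
      omega
    have hjt : (F j).val ≠ (F ⟨0, hz⟩).val := by
      intro h
      have : j = ⟨0, hz⟩ := hinj (Fin.ext h)
      rw [this] at h1
      simp only [Fin.val_mk] at h1
      omega
    have hnc : ¬ ((F ⟨0, hz⟩).val < (F j).val) := by
      intro h
      exact hFc ⟨0, hz⟩ j (Fin.lt_def.mpr (by simp only [Fin.val_mk]; omega))
        (Fin.lt_def.mpr h2) (Fin.lt_def.mpr h)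
    omega
  have hEXT : ∀ j : Fin (2*m), (F ⟨0, hz⟩).val < j.val → (F ⟨0, hz⟩).val < (F j).val := by
    intro j h1
    by_contra h
    push_neg at h
    have hj0 : (F j).val ≠ 0 := by
      intro hh
      have : F j = ⟨0, hz⟩ := Fin.ext hh
      have := congrArg F this
      rw [hFi] at this
      rw [this] at h1
      omega
    have hjt : (F j).val ≠ (F ⟨0, hz⟩).val := by
      intro hh
      have : j = ⟨0, hz⟩ := hinj (Fin.ext hh)
      rw [this] at h1
      simp only [Fin.val_mk] at h1
      omega
    have h2 := hINT (F j) (by omega) (by omega)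
    rw [hFi] at h2
    omega
  have hIeven : Even ((F ⟨0, hz⟩).val - 1) := by
    set I := Finset.univ.filter
      (fun j : Fin (2*m) => 0 < j.val ∧ j.val < (F ⟨0, hz⟩).val) with hI
    have hIcard : I.card = (F ⟨0, hz⟩).val - 1 := by
      have himg : I.image Fin.val = Finset.Ioo 0 (F ⟨0, hz⟩).val := by
        ext v
        simp only [hI, Finset.mem_image, Finset.mem_filter, Finset.mem_univ, true_and,
          Finset.mem_Ioo]
        constructor
        · rintro ⟨j, ⟨h1, h2⟩, rfl⟩; exact ⟨h1, h2⟩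
        · rintro ⟨h1, h2⟩; exact ⟨⟨v, by omega⟩, ⟨h1, h2⟩, rfl⟩
      have h2 := Finset.card_image_of_injective I Fin.val_injective
      rw [himg] at h2
      rw [← h2, Nat.card_Ioo]
      omega
    rw [← hIcard]
    apply even_card_invol I F
    · intro a ha
      rw [hI, Finset.mem_filter] at ha ⊢
      exact ⟨Finset.mem_univ _, hINT a ha.2.1 ha.2.2⟩
    · intro a _; exact hFi a
    · intro a _; exact hFn a
  obtain ⟨k, hk2⟩ := hIeven
  have htk : (F ⟨0, hz⟩).val = 2*k+1 := by omega
  have hk : k < m := by omega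
  have hb1 : ∀ j : Fin (2*k), (F (emb1 hk j)).val - 1 < 2*k := by
    intro j
    have hj := j.isLt
    have := hINT (emb1 hk j) (by simp only [emb1_val]; omega) (by simp only [emb1_val]; omega)
    omega
  have hb2 : ∀ j : Fin (2*(m-k-1)), (F (emb2 hk j)).val - (2*k+2) < 2*(m-k-1) := by
    intro j
    have hj := j.isLt
    have h1 := hEXT (emb2 hk j) (by simp only [emb2_val]; omega)
    have h2 := (F (emb2 hk j)).isLt
    omega
  let f₁ : Fin (2*k) → Fin (2*k) := fun j => ⟨(F (emb1 hk j)).val - 1, hb1 j⟩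
  let f₂ : Fin (2*(m-k-1)) → Fin (2*(m-k-1)) :=
    fun j => ⟨(F (emb2 hk j)).val - (2*k+2), hb2 j⟩
  have he1 : ∀ j, emb1 hk (f₁ j) = F (emb1 hk j) := by
    intro j
    have hj := j.isLt
    have h := hINT (emb1 hk j) (by simp only [emb1_val]; omega) (by simp only [emb1_val]; omega)
    exact Fin.ext (show (F (emb1 hk j)).val - 1 + 1 = (F (emb1 hk j)).val by omega)
  have he2 : ∀ j, emb2 hk (f₂ j) = F (emb2 hk j) := by
    intro j
    have hj := j.isLt
    have h := hEXT (emb2 hk j) (by simp only [emb2_val]; omega)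
    exact Fin.ext
      (show (F (emb2 hk j)).val - (2*k+2) + (2*k+2) = (F (emb2 hk j)).val by omega)
  have hpiv : ∀ (pf : 2*k+1 < 2*m), (⟨2*k+1, pf⟩ : Fin (2*m)) = F ⟨0, hz⟩ :=
    fun pf => Fin.ext htk.symm
  refine ⟨k, hk, f₁, f₂, G ⟨0, hz⟩, fun j => G (emb1 hk j), fun j => G (emb2 hk j),
    ⟨?_, ?_, ?_⟩, ⟨?_, ?_, ?_⟩, ?_, ?_, ?_, ?_⟩
  · intro j
    apply emb1_inj hk
    rw [he1, he1, hFi]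
  · intro j h
    exact hFn (emb1 hk j) (by rw [← he1, h])
  · intro i j h1 h2 h3
    refine hFc (emb1 hk i) (emb1 hk j) ?_ ?_ ?_
    · exact Fin.lt_def.mpr (by simp only [emb1_val]; exact Nat.add_lt_add_right (Fin.lt_def.mp h1) 1)
    · rw [← he1]
      exact Fin.lt_def.mpr (by simp only [emb1_val]; exact Nat.add_lt_add_right (Fin.lt_def.mp h2) 1)
    · rw [← he1, ← he1]
      exact Fin.lt_def.mpr (by simp only [emb1_val]; exact Nat.add_lt_add_right (Fin.lt_def.mp h3) 1)
  · intro j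
    apply emb2_inj hk
    rw [he2, he2, hFi]
  · intro j h
    exact hFn (emb2 hk j) (by rw [← he2, h])
  · intro i j h1 h2 h3
    refine hFc (emb2 hk i) (emb2 hk j) ?_ ?_ ?_
    · exact Fin.lt_def.mpr (by simp only [emb2_val]; exact Nat.add_lt_add_right (Fin.lt_def.mp h1) _)
    · rw [← he2]
      exact Fin.lt_def.mpr (by simp only [emb2_val]; exact Nat.add_lt_add_right (Fin.lt_def.mp h2) _)
    · rw [← he2, ← he2]
      exact Fin.lt_def.mpr (by simp only [emb2_val]; exact Nat.add_lt_add_right (Fin.lt_def.mp h3) _)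
  · intro j
    show G (emb1 hk (f₁ j)) = G (emb1 hk j)
    rw [he1]
    exact hG _
  · intro j
    show G (emb2 hk (f₂ j)) = G (emb2 hk j)
    rw [he2]
    exact hG _
  · funext i
    rcases cases_glue hk i with rfl | rfl | ⟨j, rfl⟩ | ⟨j, rfl⟩
    · rw [gl_zero]
      exact Fin.ext (show (2*k+1 : ℕ) = (F ⟨0, hz⟩).val from htk.symm)
    · rw [gl_pivot, hpiv (by omega), hFi]
    · rw [gl_emb1]
      exact he1 j
    · rw [gl_emb2]
      exact he2 j
  · funext i
    rcases cases_glue hk i with rfl | rfl | ⟨j, rfl⟩ | ⟨j, rfl⟩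
    · rw [gc_zero]
    · rw [gc_pivot, hpiv (by omega)]
      exact (hG _).symm
    · rw [gc_emb1]
    · rw [gc_emb2]


variable (r) in
/-- Colored noncrossing pairings on `Fin (2*k)`. -/
noncomputable def Pfin (k : ℕ) : Finset ({f : Fin (2*k) → Fin (2*k) // IsNCPairing f} ×
    (Fin (2*k) → Fin r)) :=
  Finset.univ.filter (fun x => ∀ i, x.2 (x.1.1 i) = x.2 i)

lemma PS_eq_Pfin (q : Fin r) (m : ℕ) :
    PS b q m = ∑ x ∈ Pfin r m, ncWeight b q x.1.1 x.2 := rfl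

lemma hk_of_mem {m : ℕ}
    {x : (pk : Fin r × ℕ) × (({f : Fin (2*pk.2) → Fin (2*pk.2) // IsNCPairing f} ×
      (Fin (2*pk.2) → Fin r)) × ({f : Fin (2*(m-pk.2-1)) → Fin (2*(m-pk.2-1)) // IsNCPairing f} ×
      (Fin (2*(m-pk.2-1)) → Fin r)))}
    (hx : x ∈ ((Finset.univ : Finset (Fin r)) ×ˢ Finset.range m).sigma
      (fun pk => Pfin r pk.2 ×ˢ Pfin r (m - pk.2 - 1))) : x.1.2 < m :=
  Finset.mem_range.mp (Finset.mem_product.mp (Finset.mem_sigma.mp hx).1).2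

lemma PS_rec {m : ℕ} (hm : 1 ≤ m) :
    PS b q m = ∑ p, ∑ k ∈ Finset.range m, b p q * PS b p k * PS b q (m - k - 1) := by
  have hrw : ∀ p : Fin r, ∀ k ∈ Finset.range m,
      b p q * PS b p k * PS b q (m - k - 1) =
      ∑ x₁ ∈ Pfin r k, ∑ x₂ ∈ Pfin r (m - k - 1),
        b p q * ncWeight b p x₁.1.1 x₁.2 * ncWeight b q x₂.1.1 x₂.2 := by
    intro p k _
    rw [PS_eq_Pfin, PS_eq_Pfin, mul_assoc, Finset.sum_mul_sum, Finset.mul_sum]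
    exact Finset.sum_congr rfl fun A _ => by
      rw [Finset.mul_sum]; exact Finset.sum_congr rfl fun B _ => by ring
  rw [Finset.sum_congr rfl fun p _ => Finset.sum_congr rfl (hrw p)]
  have flat : (∑ p, ∑ k ∈ Finset.range m,
      ∑ x₁ ∈ Pfin r k, ∑ x₂ ∈ Pfin r (m - k - 1),
        b p q * ncWeight b p x₁.1.1 x₁.2 * ncWeight b q x₂.1.1 x₂.2)
      = ∑ x ∈ ((Finset.univ : Finset (Fin r)) ×ˢ Finset.range m).sigma
          (fun pk => Pfin r pk.2 ×ˢ Pfin r (m - pk.2 - 1)),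
          b x.1.1 q * ncWeight b x.1.1 x.2.1.1.1 x.2.1.2 * ncWeight b q x.2.2.1.1 x.2.2.2 := by
    rw [Finset.sum_sigma, ← Finset.sum_product']
    exact Finset.sum_congr rfl fun pk _ => by rw [← Finset.sum_product']
  rw [flat, PS_eq_Pfin]
  symm
  refine Finset.sum_bij (fun x hx =>
    (⟨gl (hk_of_mem hx) x.2.1.1.1 x.2.2.1.1,
      glue_nc (hk_of_mem hx) _ _ x.2.1.1.2 x.2.2.1.2⟩,
     gc (hk_of_mem hx) x.1.1 x.2.1.2 x.2.2.2)) ?_ ?_ ?_ ?_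
  · intro x hx
    rw [Pfin, Finset.mem_filter]
    refine ⟨Finset.mem_univ _, ?_⟩
    have h1 := (Finset.mem_filter.mp (Finset.mem_product.mp (Finset.mem_sigma.mp hx).2).1).2
    have h2 := (Finset.mem_filter.mp (Finset.mem_product.mp (Finset.mem_sigma.mp hx).2).2).2
    exact glue_const (hk_of_mem hx) _ _ _ _ _ h1 h2
  · rintro ⟨⟨p, k⟩, ⟨⟨F1, h1⟩, G1⟩, ⟨⟨F2, h2⟩, G2⟩⟩ hx
      ⟨⟨p', k'⟩, ⟨⟨F1', h1'⟩, G1'⟩, ⟨⟨F2', h2'⟩, G2'⟩⟩ hx' heq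
    have hk := hk_of_mem hx
    have hk' := hk_of_mem hx'
    simp only [Prod.mk.injEq, Subtype.mk.injEq] at heq
    obtain ⟨heqf, heqg⟩ := heq
    have hz : (0:ℕ) < 2*m := by omega
    have hkk : k = k' := by
      have hv := congrArg (fun f => (f ⟨0, hz⟩).val) heqf
      simp only [gl_zero, Fin.val_mk] at hv
      omega
    subst hkk
    have hpp : p = p' := by
      have hv := congrArg (fun g => g ⟨0, hz⟩) heqg
      simp only [gc_zero] at hv
      exact hv
    subst hpp
    have hF1 : F1 = F1' := by
      funext j
      apply emb1_inj hk
      rw [← gl_emb1 hk F1 F2 j, ← gl_emb1 hk F1' F2' j, heqf]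
    subst hF1
    have hF2 : F2 = F2' := by
      funext j
      apply emb2_inj hk
      rw [← gl_emb2 hk F1 F2 j, ← gl_emb2 hk F1 F2' j, heqf]
    subst hF2
    have hG1 : G1 = G1' := by
      funext j
      rw [← gc_emb1 hk p G1 G2 j, ← gc_emb1 hk p G1' G2' j, heqg]
    subst hG1
    have hG2 : G2 = G2' := by
      funext j
      rw [← gc_emb2 hk p G1 G2 j, ← gc_emb2 hk p G1 G2' j, heqg]
    subst hG2
    rfl
  · rintro ⟨⟨F, hF⟩, G⟩ hy
    have hG := (Finset.mem_filter.mp hy).2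
    obtain ⟨k, hk, f₁, f₂, p, g₁, g₂, hnc1, hnc2, hg1, hg2, hgl, hgc⟩ :=
      unglue hm F G hF hG
    refine ⟨⟨(p, k), (⟨⟨f₁, hnc1⟩, g₁⟩, ⟨⟨f₂, hnc2⟩, g₂⟩)⟩, ?_, ?_⟩
    · rw [Finset.mem_sigma]
      refine ⟨Finset.mem_product.mpr ⟨Finset.mem_univ _, Finset.mem_range.mpr hk⟩, ?_⟩
      refine Finset.mem_product.mpr ⟨?_, ?_⟩ <;>
        · rw [Pfin, Finset.mem_filter]
          exact ⟨Finset.mem_univ _, by assumption⟩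
    · exact Prod.ext (Subtype.ext hgl) hgc
  · intro x hx
    exact (ncWeight_glue (hk_of_mem hx) _ _ _ _ _).symm

lemma Mom_eq_PS (hb : ∀ i j, 0 ≤ b i j) : ∀ (m : ℕ) (q : Fin r), Mom b q (2*m) = PS b q m := by
  intro m
  induction m using Nat.strong_induction_on with
  | _ m ih =>
    intro q
    match m with
    | 0 => rw [show 2*0 = 0 from rfl, Mom_zero, PS_zero]
    | Nat.succ n =>
      rw [Mom_rec hb (by omega), PS_rec (by omega)]
      refine Finset.sum_congr rfl fun p _ => Finset.sum_congr rfl fun k hk => ?_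
      have hkn := Finset.mem_range.mp hk
      rw [ih k (by omega) p,
        show 2*(n+1) - 2*k - 2 = 2*((n+1) - k - 1) by omega,
        ih ((n+1) - k - 1) (by omega) q]

end Pairings

end Stmt11Aux

open Stmt11Aux in
/-- The moments of `ω = ∑_{p,q} ω_{p,q}` satisfy the recurrence
`Ψ_q(ω^{2m}) = ∑_p ∑_{k=0}^{m-1} b_{p,q} Ψ_p(ω^{2k}) Ψ_q(ω^{2m-2k-2})`, with
`Ψ_q(ω⁰) = 1` and vanishing odd moments, and consequently
`Ψ_q(ω^{2m}) = ∑_{(π,f) ∈ NC²_{2m,q}[r]} b_q(π,f)`, the sum being over noncrossing pair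
partitions of `[2m]` with blocks colored by `[r]` and the imaginary block colored by `q`. -/
theorem stmt11 {H : Type} [NormedAddCommGroup H] [InnerProductSpace ℂ H] [CompleteSpace H]
    (r : ℕ) (b : Fin r → Fin r → ℝ) (hb : ∀ i j, 0 ≤ b i j)
    (e : Fin r × List (Fin r) → H) (he : Orthonormal ℂ e)
    (hdense : (Submodule.span ℂ (Set.range e)).topologicalClosure = ⊤)
    (c : Fin r → Fin r → H →L[ℂ] H)
    (hc : ∀ i j x, c i j (e x) =
      if actsOn j x then (Real.sqrt (b i j) : ℂ) • e (x.1, i :: x.2) else 0)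
    (om : H →L[ℂ] H) (hom : om = ∑ i, ∑ j, (c i j + adjoint (c i j)))
    (Psi : Fin r → (H →L[ℂ] H) → ℂ)
    (hPsi : ∀ q X, Psi q X =
      @inner ℂ H _ (e (q, ([] : List (Fin r)))) (X (e (q, [])))) :
    (∀ (q : Fin r) (m : ℕ), 1 ≤ m →
      Psi q (om ^ (2 * m)) = ∑ p, ∑ k ∈ Finset.range m,
        ((b p q : ℝ) : ℂ) * Psi p (om ^ (2 * k)) * Psi q (om ^ (2 * m - 2 * k - 2))) ∧
    (∀ q : Fin r, Psi q (om ^ 0) = 1) ∧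
    (∀ (q : Fin r) (m : ℕ), Odd m → Psi q (om ^ m) = 0) ∧
    (∀ (q : Fin r) (m : ℕ),
      Psi q (om ^ (2 * m)) =
        ((∑ π : {f : Fin (2 * m) → Fin (2 * m) // IsNCPairing f},
          ∑ g : Fin (2 * m) → Fin r,
            if ∀ i, g (π.1 i) = g i then ncWeight b q π.1 g else 0 : ℝ) : ℂ)) := by
  classical
  have horth : ∀ x y, (inner ℂ (e x) (e y) : ℂ) = if x = y then 1 else 0 :=
    orthonormal_iff_ite.mp he
  have hext : ∀ v w : H, (∀ x, (inner ℂ (e x) v : ℂ) = inner ℂ (e x) w) → v = w := by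
    intro v w h
    have hbot : (Submodule.span ℂ (Set.range e))ᗮ = ⊥ :=
      Submodule.topologicalClosure_eq_top_iff.mp hdense
    have hmem : v - w ∈ (Submodule.span ℂ (Set.range e))ᗮ := by
      rw [Submodule.mem_orthogonal]
      intro u hu
      induction hu using Submodule.span_induction with
      | mem x hx =>
        obtain ⟨i, rfl⟩ := hx
        rw [inner_sub_right, h i, sub_self]
      | zero => exact inner_zero_left _
      | add x y _ _ hx hy => rw [inner_add_left, hx, hy, add_zero]
      | smul a x _ hx => rw [inner_smul_left, hx, mul_zero]
    rw [hbot, Submodule.mem_bot] at hmem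
    exact sub_eq_zero.mp hmem
  have hadj0 : ∀ (i j p : Fin r), (adjoint (c i j)) (e (p, ([] : List (Fin r)))) = 0 := by
    intro i j p
    apply hext
    intro y
    rw [ContinuousLinearMap.adjoint_inner_right, hc i j y, inner_zero_right]
    by_cases hy : actsOn j y
    · rw [if_pos hy, inner_smul_left, horth, if_neg (by simp), mul_zero]
    · rw [if_neg hy, inner_zero_left]
  have hadj1 : ∀ (i j p : Fin r) (a : Fin r) (t : List (Fin r)),
      (adjoint (c i j)) (e (p, a :: t)) =
      if a = i ∧ actsOn j (p, t) then (Real.sqrt (b i j) : ℂ) • e (p, t) else 0 := by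
    intro i j p a t
    apply hext
    intro y
    rw [ContinuousLinearMap.adjoint_inner_right, hc i j y]
    by_cases hy : actsOn j y
    · rw [if_pos hy, inner_smul_left, horth]
      by_cases hc1 : a = i ∧ actsOn j (p, t)
      · rw [if_pos hc1, inner_smul_right, horth]
        obtain ⟨rfl, hact⟩ := hc1
        by_cases hyp : y = (p, t)
        · subst hyp
          rw [if_pos rfl, if_pos rfl, Complex.conj_ofReal]
        · rw [if_neg (fun h => hyp (by
            obtain ⟨y1, y2⟩ := y
            simp only [Prod.mk.injEq, List.cons.injEq] at h
            exact Prod.ext h.1 h.2.2)), if_neg hyp, mul_zero, mul_zero]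
      · rw [if_neg hc1, inner_zero_right]
        rw [if_neg, mul_zero]
        intro h
        obtain ⟨y1, y2⟩ := y
        simp only [Prod.mk.injEq, List.cons.injEq] at h
        obtain ⟨h1, h2, h3⟩ := h
        subst h1; subst h3
        exact hc1 ⟨h2.symm, hy⟩
    · rw [if_neg hy, inner_zero_left]
      by_cases hc1 : a = i ∧ actsOn j (p, t)
      · rw [if_pos hc1, inner_smul_right, horth, if_neg, mul_zero]
        intro h
        exact hy (by rw [h]; exact hc1.2)
      · rw [if_neg hc1, inner_zero_right]
  have hact : ∀ (qq j : Fin r) (s : List (Fin r)),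
      (actsOn j (qq, s) = true) ↔ j = s.headD qq := by
    intro qq j s
    match s with
    | [] =>
      show (qq == j) = true ↔ j = qq
      rw [beq_iff_eq]
      exact eq_comm
    | a :: t =>
      show (a == j) = true ↔ j = a
      rw [beq_iff_eq]
      exact eq_comm
  have hsum2 : ∀ (v : Fin r → Fin r → H) (a0 j0 : Fin r),
      (∑ x : Fin r, ∑ x1 : Fin r, if a0 = x then if x1 = j0 then v x x1 else 0 else 0) =
        v a0 j0 := by
    intro v a0 j0
    have h1 : ∀ x : Fin r, (∑ x1 : Fin r, if a0 = x then if x1 = j0 then v x x1 else 0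
        else 0) = if a0 = x then v x j0 else 0 := by
      intro x
      by_cases h : a0 = x
      · simp only [if_pos h]
        rw [Finset.sum_ite_eq' Finset.univ j0 (fun x1 => v x x1)]
        simp
      · simp only [if_neg h, Finset.sum_const_zero]
    rw [Finset.sum_congr rfl fun x _ => h1 x,
      Finset.sum_ite_eq Finset.univ a0 (fun x => v x j0)]
    simp
  have hstep : ∀ (qq : Fin r) (s : List (Fin r)), om (e (qq, s)) =
      ∑ mv : Mv r, ((wgt b qq s [mv] : ℝ) : ℂ) •
        ((run s [mv]).elim 0 (fun s' => e (qq, s'))) := by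
    intro qq s
    rw [hom, ContinuousLinearMap.sum_apply]
    simp only [ContinuousLinearMap.sum_apply, ContinuousLinearMap.add_apply]
    rw [Finset.sum_congr rfl (fun i _ => Finset.sum_add_distrib), Finset.sum_add_distrib]
    have hA : (∑ i : Fin r, ∑ j : Fin r, (c i j) (e (qq, s))) =
        ∑ i : Fin r, (Real.sqrt (b i (s.headD qq)) : ℂ) • e (qq, i :: s) := by
      refine Finset.sum_congr rfl fun i _ => ?_
      rw [Finset.sum_congr rfl (fun j _ => by rw [hc i j (qq, s)])]
      simp only [hact]
      rw [Finset.sum_ite_eq' Finset.univ (s.headD qq)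
        (fun j => (Real.sqrt (b i j) : ℂ) • e (qq, i :: s))]
      simp
    have hB : (∑ i : Fin r, ∑ j : Fin r, (adjoint (c i j)) (e (qq, s))) =
        match s with
        | [] => (0 : H)
        | a :: t => (Real.sqrt (b a (t.headD qq)) : ℂ) • e (qq, t) := by
      match s with
      | [] => simp [hadj0]
      | a :: t =>
        rw [Finset.sum_congr rfl (fun i _ => Finset.sum_congr rfl (fun j _ => by
          rw [hadj1 i j qq a t]))]
        simp only [hact, ite_and]
        exact hsum2 (fun i j => (Real.sqrt (b i j) : ℂ) • e (qq, t)) a (t.headD qq)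
    rw [hA, hB, Fintype.sum_option]
    rw [add_comm]
    congr 1
    · match s with
      | [] => simp
      | a :: t => simp [wgt, run]
    · refine Finset.sum_congr rfl fun i _ => ?_
      simp [wgt, run]
  have hpow : ∀ (n : ℕ) (qq : Fin r) (s : List (Fin r)), (om ^ n) (e (qq, s)) =
      ∑ ms ∈ L r n, ((wgt b qq s ms : ℝ) : ℂ) •
        ((run s ms).elim 0 (fun s' => e (qq, s'))) := by
    intro n
    induction n with
    | zero =>
      intro qq s
      rw [pow_zero, ContinuousLinearMap.one_apply,
        show L r 0 = {([] : List (Mv r))} from rfl, Finset.sum_singleton]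
      simp
    | succ n ih =>
      intro qq s
      rw [pow_succ, ContinuousLinearMap.mul_apply, hstep qq s, map_sum]
      simp only [map_smul]
      have hterm : ∀ mv : Mv r, ((wgt b qq s [mv] : ℝ) : ℂ) •
          (om ^ n) ((run s [mv]).elim 0 (fun s' => e (qq, s'))) =
          ∑ ms ∈ L r n, ((wgt b qq s (mv :: ms) : ℝ) : ℂ) •
            ((run s (mv :: ms)).elim 0 (fun s' => e (qq, s'))) := by
        intro mv
        match mv, s with
        | some i, s =>
          simp only [run_push, run_nil, Option.elim_some, wgt_push, wgt_nil, mul_one]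
          rw [ih qq (i :: s), Finset.smul_sum]
          refine Finset.sum_congr rfl fun ms _ => ?_
          rw [smul_smul]
          push_cast
          ring_nf
        | none, [] =>
          simp only [run_pop_nil, Option.elim_none, wgt_pop_nil, Complex.ofReal_zero,
            zero_smul, map_zero, smul_zero]
          simp
        | none, a :: t =>
          simp only [run_pop, run_nil, Option.elim_some, wgt_pop, wgt_nil, mul_one]
          rw [ih qq t, Finset.smul_sum]
          refine Finset.sum_congr rfl fun ms _ => ?_
          rw [smul_smul]
          push_cast
          ring_nf
      rw [Finset.sum_congr rfl fun mv _ => hterm mv]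
      rw [show L r (n+1) = ((Finset.univ : Finset (Mv r)) ×ˢ L r n).image
        (fun x => x.1 :: x.2) from rfl]
      rw [Finset.sum_image (by
        rintro ⟨mv, ms⟩ - ⟨mv', ms'⟩ - h
        simp only [List.cons.injEq] at h
        exact Prod.ext h.1 h.2)]
      rw [Finset.sum_product]
  have hbridge : ∀ (qq : Fin r) (n : ℕ), Psi qq (om ^ n) = ((Mom b qq n : ℝ) : ℂ) := by
    intro qq n
    rw [hPsi, hpow n qq [], inner_sum]
    have hM : ((Mom b qq n : ℝ) : ℂ) =
        ∑ ms ∈ L r n, if run ([] : List (Fin r)) ms = some [] then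
          ((wgt b qq [] ms : ℝ) : ℂ) else 0 := by
      rw [Mom, Finset.sum_filter, Complex.ofReal_sum]
      refine Finset.sum_congr rfl fun ms _ => ?_
      rw [apply_ite (fun x : ℝ => (x : ℂ)), Complex.ofReal_zero]
    rw [hM]
    refine Finset.sum_congr rfl fun ms _ => ?_
    rw [inner_smul_right]
    rcases hrun : run ([] : List (Fin r)) ms with _ | s'
    · rw [if_neg (by simp)]
      simp
    · simp only [Option.elim]
      rw [horth]
      by_cases hs' : s' = []
      · subst hs'
        rw [if_pos rfl, mul_one, if_pos rfl]
      · rw [if_neg (by simp [hs']), mul_zero, if_neg (by simp [hs'])]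
  refine ⟨?_, ?_, ?_, ?_⟩
  · intro q m hm
    simp only [hbridge]
    rw [Mom_rec hb hm]
    push_cast
    rfl
  · intro q
    rw [hbridge q 0, Mom_zero]
    norm_num
  · intro q m hodd
    rw [hbridge q m, Mom_odd hodd]
    norm_num
  · intro q m
    rw [hbridge q (2*m), Mom_eq_PS hb m q, PS_eq_sum]
end
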